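/- arXiv:2302.08315 — 14 statements merged into one kernel-verified Lean document; each statement's English description precedes it below -/
import Mathlib

section
/- For every positive integer n, the determinant of the n×n matrix whose (j,k) entry is |j-k| equals (-1)^(n-1)·(n-1)·2^(n-2). -/
/-!
Subtracting from every row but the first its predecessor does not change the determinant.
Doing this twice turns rows `2, …, n - 1` of `(|j - k|)` into second differences of
`x ↦ |x - k|`, which vanish except at the kink `x = k + 1`, where they equal `2`; so row `r`
becomes `2 e_{r-1}`. Column `0` then has a single nonzero entry, a `1` in row `1`; expanding
along it leaves a matrix whose last column is `(n - 1) e_0` and whose complementary minor is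
`2 • 1` of size `n - 2`.
-/

open Matrix

namespace Matrix

variable {R : Type*} [CommRing R]

theorem det_succ_column_single {n : ℕ} (A : Matrix (Fin (n + 1)) (Fin (n + 1)) R)
    (i j : Fin (n + 1)) (h : ∀ k ≠ i, A k j = 0) :
    A.det = (-1) ^ ((i : ℕ) + j) * A i j * (A.submatrix i.succAbove j.succAbove).det := by
  rw [det_succ_column A j, Finset.sum_eq_single i (fun k _ hk => by rw [h k hk, mul_zero, zero_mul])
    (by simp)]

theorem det_eq_of_succ_row_eq_single {n : ℕ} (A : Matrix (Fin (n + 1)) (Fin (n + 1)) R) (c : R)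
    (h : ∀ t : Fin n, A t.succ = Pi.single t.castSucc c) :
    A.det = (-1) ^ n * A 0 (Fin.last n) * c ^ n := by
  have hlast : ∀ k ≠ 0, A k (Fin.last n) = 0 := fun k hk => by
    obtain ⟨t, rfl⟩ := Fin.exists_succ_eq.2 hk
    simp [h, (Fin.castSucc_lt_last t).ne']
  have hminor : A.submatrix Fin.succ Fin.castSucc = c • 1 := by
    ext t k
    simp [h, Pi.single_apply, one_apply, eq_comm]
  rw [det_succ_column_single A 0 (Fin.last n) hlast, Fin.succAbove_zero, Fin.succAbove_last,
    hminor, det_smul, det_one, Fintype.card_fin]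
  simp

def rowDiff {n : ℕ} {m : Type*} (A : Matrix (Fin (n + 1)) m R) : Matrix (Fin (n + 1)) m R :=
  of (Fin.cons (A 0) fun i => A i.succ - A i.castSucc)

theorem rowDiff_zero {n : ℕ} {m : Type*} (A : Matrix (Fin (n + 1)) m R) (j : m) :
    rowDiff A 0 j = A 0 j := rfl

theorem rowDiff_succ {n : ℕ} {m : Type*} (A : Matrix (Fin (n + 1)) m R) (i : Fin n) (j : m) :
    rowDiff A i.succ j = A i.succ j - A i.castSucc j := rfl

theorem det_rowDiff {n : ℕ} (A : Matrix (Fin (n + 1)) (Fin (n + 1)) R) :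
    (rowDiff A).det = A.det :=
  (det_eq_of_forall_row_eq_smul_add_pred (A := A) (B := rowDiff A) (fun _ => 1) (fun _ => rfl)
    (fun i j => by simp [rowDiff_succ])).symm

end Matrix

def distMatrix (n : ℕ) : Matrix (Fin n) (Fin n) ℤ :=
  of fun j k => |(j : ℤ) - k|

theorem abs_sub_second_diff (x k : ℤ) :
    |x + 2 - k| - |x + 1 - k| - (|x + 1 - k| - |x - k|) = if k = x + 1 then 2 else 0 := by
  simp only [abs_eq_max_neg]
  split_ifs <;> omega

section SecondRowDiff

variable {N : ℕ}

theorem rowDiff_rowDiff_distMatrix_zero (k : Fin (N + 2)) :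
    rowDiff (rowDiff (distMatrix (N + 2))) 0 k = k := by
  simp [rowDiff_zero, distMatrix]

theorem rowDiff_rowDiff_distMatrix_one_zero :
    rowDiff (rowDiff (distMatrix (N + 2))) 1 0 = 1 := by
  rw [← Fin.succ_zero_eq_one, rowDiff_succ, Fin.castSucc_zero, rowDiff_succ, rowDiff_zero]
  simp [distMatrix]

theorem rowDiff_rowDiff_distMatrix_succ_succ (t : Fin N) :
    rowDiff (rowDiff (distMatrix (N + 2))) t.succ.succ = Pi.single t.succ.castSucc 2 := by
  funext k
  rw [rowDiff_succ, ← Fin.succ_castSucc, rowDiff_succ, rowDiff_succ, Pi.single_apply]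
  simp only [distMatrix, of_apply, Fin.val_succ, Fin.val_castSucc, Fin.ext_iff]
  push_cast
  rw [add_assoc, one_add_one_eq_two, abs_sub_second_diff]
  norm_cast

theorem rowDiff_rowDiff_distMatrix_col_zero (i : Fin (N + 2)) (hi : i ≠ 1) :
    rowDiff (rowDiff (distMatrix (N + 2))) i 0 = 0 := by
  induction i using Fin.cases with
  | zero => rw [rowDiff_rowDiff_distMatrix_zero]; rfl
  | succ i =>
    induction i using Fin.cases with
    | zero => exact absurd rfl hi
    | succ t =>
      rw [rowDiff_rowDiff_distMatrix_succ_succ, Pi.single_apply,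
        if_neg (Fin.castSucc_ne_zero_iff.2 (Fin.succ_ne_zero t)).symm]

end SecondRowDiff

theorem det_distMatrix_add_two (N : ℕ) :
    (distMatrix (N + 2)).det = (-1) ^ (N + 1) * ((N : ℤ) + 1) * 2 ^ N := by
  rw [← det_rowDiff, ← det_rowDiff,
    det_succ_column_single _ 1 0 rowDiff_rowDiff_distMatrix_col_zero,
    rowDiff_rowDiff_distMatrix_one_zero, det_eq_of_succ_row_eq_single _ 2 fun t => ?_]
  · simp only [submatrix_apply, Fin.one_succAbove_zero, Fin.succAbove_zero,
      rowDiff_rowDiff_distMatrix_zero, Fin.val_one, Fin.val_zero, Fin.succ_last, Fin.val_last]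
    push_cast
    ring
  · funext k
    simp only [submatrix_apply, Fin.one_succAbove_succ, Fin.succAbove_zero,
      rowDiff_rowDiff_distMatrix_succ_succ]
    simp [Pi.single_apply]

theorem stmt_0 (n : ℕ) (hn : 0 < n) :
    Matrix.det (Matrix.of fun j k : Fin n => |((j : ℤ) - (k : ℤ))|) =
      (-1) ^ (n - 1) * ((n : ℤ) - 1) * 2 ^ (n - 2) := by
  obtain _ | _ | N := n
  · omega
  · simp
  · change (distMatrix (N + 2)).det = _
    rw [det_distMatrix_add_two]
    push_cast
    ring
end

section
/- Let A, B be elements of a commutative ring R, and let (w_n) be a sequence in R with w_{n+1} = A·w_n − B·w_{n−1} for all n ≥ 1. Then for every positive integer n, det[w_{|j−k|}]_{1≤j,k≤n} = w_0·u_n(A',B') + ((B·w_0)^2 − (A·w_0 − w_1)^2)·u_{n−1}(A',B'), where A' = (A^2 − B^2 + 1)·w_0 − 2A·w_1 and B' = (A·w_0 − (B+1)·w_1)^2. -/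
open Matrix

def lucasU {R : Type*} [CommRing R] (x y : R) : ℕ → R
  | 0 => 0
  | 1 => 1
  | n + 2 => x * lucasU x y (n + 1) - y * lucasU x y n

def lucasV {R : Type*} [CommRing R] (x y : R) : ℕ → R
  | 0 => 2
  | 1 => x
  | n + 2 => x * lucasV x y (n + 1) - y * lucasV x y n

namespace Stmt1Aux

variable {R : Type*} [CommRing R]

def Mw (w : ℕ → R) (n : ℕ) : Matrix (Fin n) (Fin n) R :=
  Matrix.of fun j k => w ((j : ℤ) - (k : ℤ)).natAbs

def ee (A B : R) (w : ℕ → R) (n : ℕ) (j k : ℕ) : R :=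
  if j = n + 1 ∧ k = n + 1 then (A ^ 2 - B ^ 2 + 1) * w 0 - 2 * A * w 1
  else if (j = n + 1 ∧ k = n) ∨ (j = n ∧ k = n + 1) then -(A * w 0 - (B + 1) * w 1)
  else if j = n + 1 ∨ k = n + 1 then 0
  else w ((j : ℤ) - (k : ℤ)).natAbs

def EE (A B : R) (w : ℕ → R) (n : ℕ) : Matrix (Fin (n + 2)) (Fin (n + 2)) R :=
  Matrix.of fun j k => ee A B w n (j : ℕ) (k : ℕ)

theorem step1 (A B : R) (w : ℕ → R) (hw : ∀ m : ℕ, w (m + 2) = A * w (m + 1) - B * w m)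
    (n : ℕ) (hn : 1 ≤ n) : (Mw w (n + 2)).det = (EE A B w n).det := by
  have h2 : w 2 = A * w 1 - B * w 0 := by simpa using hw 0
  set lst : Fin (n + 2) := ⟨n + 1, by omega⟩ with hlstdef
  set p : Fin (n + 2) := ⟨n, by omega⟩ with hpdef
  set q : Fin (n + 2) := ⟨n - 1, by omega⟩ with hqdef
  have vl : (lst : ℕ) = n + 1 := rfl
  have vp : (p : ℕ) = n := rfl
  have vq : (q : ℕ) = n - 1 := rfl
  have hpl : p ≠ lst := by rw [Ne, Fin.ext_iff, vp, vl]; omega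
  have hql : q ≠ lst := by rw [Ne, Fin.ext_iff, vq, vl]; omega
  set M : Matrix (Fin (n + 2)) (Fin (n + 2)) R := Mw w (n + 2) with hM
  have hMe : ∀ a b : Fin (n + 2), M a b = w ((a : ℤ) - (b : ℤ)).natAbs := fun a b => rfl
  set M1 := M.updateRow lst (M lst + (-A) • M p) with hM1
  set M2 := M1.updateRow lst (M1 lst + B • M1 q) with hM2
  set M3 := M2.updateCol lst (fun r => M2 r lst + (-A) • M2 r p) with hM3
  set M4 := M3.updateCol lst (fun r => M3 r lst + B • M3 r q) with hM4
  have hM2e : ∀ jj kk : Fin (n + 2), M2 jj kk =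
      if jj = lst then M jj kk + (-A) * M p kk + B * M q kk else M jj kk := by
    intro jj kk
    by_cases h : jj = lst
    · subst h
      rw [if_pos rfl, hM2, Matrix.updateRow_self, hM1]
      simp only [Pi.add_apply, Pi.smul_apply, smul_eq_mul, Matrix.updateRow_self,
        Matrix.updateRow_ne hql]
      try ring
    · rw [if_neg h, hM2, Matrix.updateRow_ne h, hM1, Matrix.updateRow_ne h]
  have hM4e : ∀ jj kk : Fin (n + 2), M4 jj kk =
      if kk = lst then M2 jj lst + (-A) * M2 jj p + B * M2 jj q else M2 jj kk := by
    intro jj kk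
    by_cases h : kk = lst
    · subst h
      rw [if_pos rfl, hM4, Matrix.updateCol_self, hM3, Matrix.updateCol_self,
        Matrix.updateCol_ne hql]
      simp only [smul_eq_mul]
      try ring
    · rw [if_neg h, hM4, Matrix.updateCol_ne h, hM3, Matrix.updateCol_ne h]
  have key : M4 = EE A B w n := by
    ext j k
    have hjlt : (j : ℕ) < n + 2 := j.isLt
    have hklt : (k : ℕ) < n + 2 := k.isLt
    rw [hM4e]
    show _ = ee A B w n (j : ℕ) (k : ℕ)
    by_cases hk : k = lst
    · rw [if_pos hk]
      by_cases hj : j = lst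
      · -- corner
        subst hj; subst hk
        rw [hM2e, hM2e, hM2e, if_pos rfl, if_pos rfl, if_pos rfl]
        rw [hMe lst lst, hMe p lst, hMe q lst, hMe lst p, hMe p p, hMe q p,
          hMe lst q, hMe p q, hMe q q]
        rw [show (((lst:ℕ):ℤ) - ((lst:ℕ):ℤ)).natAbs = 0 by omega,
          show (((p:ℕ):ℤ) - ((lst:ℕ):ℤ)).natAbs = 1 by omega,
          show (((q:ℕ):ℤ) - ((lst:ℕ):ℤ)).natAbs = 2 by omega,
          show (((lst:ℕ):ℤ) - ((p:ℕ):ℤ)).natAbs = 1 by omega,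
          show (((p:ℕ):ℤ) - ((p:ℕ):ℤ)).natAbs = 0 by omega,
          show (((q:ℕ):ℤ) - ((p:ℕ):ℤ)).natAbs = 1 by omega,
          show (((lst:ℕ):ℤ) - ((q:ℕ):ℤ)).natAbs = 2 by omega,
          show (((p:ℕ):ℤ) - ((q:ℕ):ℤ)).natAbs = 1 by omega,
          show (((q:ℕ):ℤ) - ((q:ℕ):ℤ)).natAbs = 0 by omega]
        rw [ee, if_pos (by omega), h2]
        ring
      · -- j ≠ lst, k = lst
        subst hk
        have hj' : (j : ℕ) ≠ n + 1 := fun h => hj (Fin.ext (by rw [h, vl]))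
        rw [hM2e, hM2e, hM2e, if_neg hj, if_neg hj, if_neg hj]
        rw [hMe j lst, hMe j p, hMe j q]
        rcases Nat.lt_or_ge (j : ℕ) n with hjn | hjn
        · rw [show (((j:ℕ):ℤ) - ((lst:ℕ):ℤ)).natAbs = (n - 1 - (j:ℕ)) + 2 by omega,
            show (((j:ℕ):ℤ) - ((p:ℕ):ℤ)).natAbs = (n - 1 - (j:ℕ)) + 1 by omega,
            show (((j:ℕ):ℤ) - ((q:ℕ):ℤ)).natAbs = (n - 1 - (j:ℕ)) by omega]
          rw [ee, if_neg (by omega), if_neg (by omega), if_pos (by omega), hw (n - 1 - (j:ℕ))]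
          ring
        · have hjn' : (j : ℕ) = n := by omega
          rw [show (((j:ℕ):ℤ) - ((lst:ℕ):ℤ)).natAbs = 1 by omega,
            show (((j:ℕ):ℤ) - ((p:ℕ):ℤ)).natAbs = 0 by omega,
            show (((j:ℕ):ℤ) - ((q:ℕ):ℤ)).natAbs = 1 by omega]
          rw [ee, if_neg (by omega), if_pos (by omega)]
          ring
    · rw [if_neg hk, hM2e]
      have hk' : (k : ℕ) ≠ n + 1 := fun h => hk (Fin.ext (by rw [h, vl]))
      by_cases hj : j = lst
      · -- j = lst, k ≠ lst
        subst hj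
        rw [if_pos rfl, hMe lst k, hMe p k, hMe q k]
        rcases Nat.lt_or_ge (k : ℕ) n with hkn | hkn
        · rw [show (((lst:ℕ):ℤ) - ((k:ℕ):ℤ)).natAbs = (n - 1 - (k:ℕ)) + 2 by omega,
            show (((p:ℕ):ℤ) - ((k:ℕ):ℤ)).natAbs = (n - 1 - (k:ℕ)) + 1 by omega,
            show (((q:ℕ):ℤ) - ((k:ℕ):ℤ)).natAbs = (n - 1 - (k:ℕ)) by omega]
          rw [ee, if_neg (by omega), if_neg (by omega), if_pos (by omega), hw (n - 1 - (k:ℕ))]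
          ring
        · have hkn' : (k : ℕ) = n := by omega
          rw [show (((lst:ℕ):ℤ) - ((k:ℕ):ℤ)).natAbs = 1 by omega,
            show (((p:ℕ):ℤ) - ((k:ℕ):ℤ)).natAbs = 0 by omega,
            show (((q:ℕ):ℤ) - ((k:ℕ):ℤ)).natAbs = 1 by omega]
          rw [ee, if_neg (by omega), if_pos (by omega)]
          ring
      · -- generic
        have hj' : (j : ℕ) ≠ n + 1 := fun h => hj (Fin.ext (by rw [h, vl]))
        rw [if_neg hj, hMe j k, ee, if_neg (by omega), if_neg (by omega), if_neg (by omega)]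
  calc M.det = M1.det := (Matrix.det_updateRow_add_smul_self M (Ne.symm hpl) (-A)).symm
    _ = M2.det := (Matrix.det_updateRow_add_smul_self M1 (Ne.symm hql) B).symm
    _ = M3.det := (Matrix.det_updateCol_add_smul_self M2 (Ne.symm hpl) (-A)).symm
    _ = M4.det := (Matrix.det_updateCol_add_smul_self M3 (Ne.symm hql) B).symm
    _ = (EE A B w n).det := by rw [key]

theorem step2 (A B : R) (w : ℕ → R) (n : ℕ) (hn : 1 ≤ n) :
    (EE A B w n).det = ((A ^ 2 - B ^ 2 + 1) * w 0 - 2 * A * w 1) * (Mw w (n + 1)).det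
      - (A * w 0 - (B + 1) * w 1) ^ 2 * (Mw w n).det := by
  have hgv : ∀ c : Fin (n + 1),
      (((Fin.castSucc (Fin.last n)).succAbove c : Fin (n+2)) : ℕ)
        = if (c : ℕ) < n then (c : ℕ) else (c : ℕ) + 1 := by
    intro c
    rw [Fin.succAbove]
    rcases lt_or_ge (c : ℕ) n with h | h
    · rw [if_pos (by simpa [Fin.lt_def] using h), if_pos h]; simp
    · rw [if_neg (by simpa [Fin.lt_def] using not_lt.mpr h), if_neg (not_lt.mpr h)]; simp
  have hEe : ∀ (j k : Fin (n + 2)), EE A B w n j k = ee A B w n (j : ℕ) (k : ℕ) := fun _ _ => rfl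
  -- the (n+1) × (n+1) minor at (last, castSucc last)
  have hminor : ((EE A B w n).submatrix (Fin.last (n+1)).succAbove
      (Fin.castSucc (Fin.last n)).succAbove).det
      = -(A * w 0 - (B + 1) * w 1) * (Mw w n).det := by
    set Q := (EE A B w n).submatrix (Fin.last (n+1)).succAbove
      (Fin.castSucc (Fin.last n)).succAbove with hQ
    have hQe : ∀ (a b : Fin (n+1)), Q a b
        = ee A B w n (a : ℕ) (if (b : ℕ) < n then (b : ℕ) else (b : ℕ) + 1) := by
      intro a b
      rw [hQ, Matrix.submatrix_apply, Fin.succAbove_last, hEe, Fin.coe_castSucc, hgv]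
    rw [Matrix.det_succ_column Q (Fin.last n), Fin.sum_univ_castSucc]
    have hz : (∑ i : Fin n, (-1 : R) ^ ((Fin.castSucc i : ℕ) + (Fin.last n : ℕ))
        * Q (Fin.castSucc i) (Fin.last n)
        * (Q.submatrix (Fin.castSucc i).succAbove (Fin.last n).succAbove).det) = 0 := by
      refine Finset.sum_eq_zero fun i _ => ?_
      have hi : (i : ℕ) < n := i.isLt
      simp only [hQe, Fin.coe_castSucc, Fin.val_last]
      rw [if_neg (lt_irrefl n), ee, if_neg (by omega), if_neg (by omega), if_pos (by omega)]
      ring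
    rw [hz, zero_add]
    have hsub : Q.submatrix (Fin.last n).succAbove (Fin.last n).succAbove = Mw w n := by
      ext a b
      have ha : (a : ℕ) < n := a.isLt
      have hb : (b : ℕ) < n := b.isLt
      rw [Matrix.submatrix_apply, Fin.succAbove_last]
      simp only [hQe, Fin.coe_castSucc]
      rw [if_pos hb, ee, if_neg (by omega), if_neg (by omega), if_neg (by omega)]
      rfl
    rw [hsub]
    simp only [hQe, Fin.val_last]
    rw [if_neg (lt_irrefl n), ee, if_neg (by omega), if_pos (by omega),
      show n + n = 2 * n by ring, pow_mul]
    simp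
  rw [Matrix.det_succ_row (EE A B w n) (Fin.last (n+1)), Fin.sum_univ_castSucc,
    Fin.sum_univ_castSucc]
  have hz : (∑ i : Fin n, (-1 : R) ^ ((Fin.last (n+1) : ℕ) + ((Fin.castSucc (Fin.castSucc i)) : ℕ))
      * EE A B w n (Fin.last (n+1)) (Fin.castSucc (Fin.castSucc i))
      * (((EE A B w n)).submatrix (Fin.last (n+1)).succAbove
          (Fin.castSucc (Fin.castSucc i)).succAbove).det) = 0 := by
    refine Finset.sum_eq_zero fun i _ => ?_
    have hi : (i : ℕ) < n := i.isLt
    simp only [hEe, Fin.val_last, Fin.coe_castSucc]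
    rw [ee, if_neg (by omega), if_neg (by omega), if_pos (by omega)]
    ring
  rw [hz, zero_add]
  have hsub : (EE A B w n).submatrix (Fin.last (n+1)).succAbove (Fin.last (n+1)).succAbove
      = Mw w (n + 1) := by
    ext a b
    have ha : (a : ℕ) < n + 1 := a.isLt
    have hb : (b : ℕ) < n + 1 := b.isLt
    rw [Matrix.submatrix_apply, Fin.succAbove_last]
    simp only [hEe, Fin.coe_castSucc]
    rw [ee, if_neg (by omega), if_neg (by omega), if_neg (by omega)]
    rfl
  rw [hsub, hminor]
  simp only [hEe, Fin.val_last, Fin.coe_castSucc]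
  rw [show ee A B w n (n+1) (n+1) = (A ^ 2 - B ^ 2 + 1) * w 0 - 2 * A * w 1 from
      by rw [ee, if_pos ⟨rfl, rfl⟩]]
  rw [show ee A B w n (n+1) n = -(A * w 0 - (B + 1) * w 1) from
      by rw [ee, if_neg (by omega), if_pos (by omega)]]
  rw [show (n + 1) + n = 2 * n + 1 by ring, show (n + 1) + (n + 1) = 2 * (n + 1) by ring,
    pow_succ, pow_mul, pow_mul]
  simp only [neg_one_sq, one_pow, one_mul, mul_one, mul_neg, neg_mul, neg_neg]
  ring

theorem mainAux (A B : R) (w : ℕ → R) (hw : ∀ m : ℕ, w (m + 2) = A * w (m + 1) - B * w m) :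
    ∀ n : ℕ,
      ((Mw w (n+1)).det = w 0 * lucasU ((A ^ 2 - B ^ 2 + 1) * w 0 - 2 * A * w 1)
          ((A * w 0 - (B + 1) * w 1) ^ 2) (n+1)
        + ((B * w 0) ^ 2 - (A * w 0 - w 1) ^ 2) *
          lucasU ((A ^ 2 - B ^ 2 + 1) * w 0 - 2 * A * w 1) ((A * w 0 - (B + 1) * w 1) ^ 2) n)
      ∧ ((Mw w (n+2)).det = w 0 * lucasU ((A ^ 2 - B ^ 2 + 1) * w 0 - 2 * A * w 1)
          ((A * w 0 - (B + 1) * w 1) ^ 2) (n+2)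
        + ((B * w 0) ^ 2 - (A * w 0 - w 1) ^ 2) *
          lucasU ((A ^ 2 - B ^ 2 + 1) * w 0 - 2 * A * w 1) ((A * w 0 - (B + 1) * w 1) ^ 2) (n+1)) := by
  intro n
  induction n with
  | zero =>
    constructor
    · rw [show (Mw w 1).det = Mw w 1 0 0 from Matrix.det_fin_one _]
      show w ((0:ℤ) - (0:ℤ)).natAbs = _
      simp [lucasU]
    · rw [Matrix.det_fin_two]
      show w (((0:ℕ):ℤ) - ((0:ℕ):ℤ)).natAbs * w (((1:ℕ):ℤ) - ((1:ℕ):ℤ)).natAbs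
          - w (((0:ℕ):ℤ) - ((1:ℕ):ℤ)).natAbs * w (((1:ℕ):ℤ) - ((0:ℕ):ℤ)).natAbs = _
      rw [show (((0:ℕ):ℤ) - ((0:ℕ):ℤ)).natAbs = 0 by omega,
        show (((1:ℕ):ℤ) - ((1:ℕ):ℤ)).natAbs = 0 by omega,
        show (((0:ℕ):ℤ) - ((1:ℕ):ℤ)).natAbs = 1 by omega,
        show (((1:ℕ):ℤ) - ((0:ℕ):ℤ)).natAbs = 1 by omega]
      show _ = _ * lucasU _ _ (0+2) + _ * lucasU _ _ (0+1)
      simp only [lucasU]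
      ring
  | succ m ih =>
    refine ⟨ih.2, ?_⟩
    have hk := (step1 A B w hw (m+1) (by omega)).trans (step2 A B w (m+1) (by omega))
    rw [show m+1+1 = m+2 from rfl] at hk
    rw [show m+1+2 = m+3 from rfl] at hk ⊢
    rw [hk, ih.1, ih.2]
    simp only [lucasU]
    ring

end Stmt1Aux

theorem stmt_1 {R : Type*} [CommRing R] (A B : R) (w : ℕ → R)
    (hw : ∀ m : ℕ, w (m + 2) = A * w (m + 1) - B * w m) (n : ℕ) (hn : 0 < n) :
    Matrix.det (Matrix.of fun j k : Fin n => w ((j : ℤ) - (k : ℤ)).natAbs) =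
      w 0 * lucasU ((A ^ 2 - B ^ 2 + 1) * w 0 - 2 * A * w 1) ((A * w 0 - (B + 1) * w 1) ^ 2) n
        + ((B * w 0) ^ 2 - (A * w 0 - w 1) ^ 2) *
          lucasU ((A ^ 2 - B ^ 2 + 1) * w 0 - 2 * A * w 1) ((A * w 0 - (B + 1) * w 1) ^ 2) (n - 1) := by
  obtain ⟨m, rfl⟩ : ∃ m, n = m + 1 := ⟨n - 1, by omega⟩
  have := (Stmt1Aux.mainAux A B w hw m).1
  simpa [Stmt1Aux.Mw] using this
end

section
/- Let A be an element of a commutative ring R. For any integer n ≥ 2, det[u_{|j−k|}(A,1)]_{1≤j,k≤n} = (−1)^{n−1}·2^{n−2}·u_{n−1}(A,1). -/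
/-!
Left multiplication by a lower unitriangular matrix replaces row `j ≥ 2` of the matrix
`[u_{|j-k|}]` by row `j` minus `A` times row `j - 1` plus row `j - 2`. Because the recurrence of
`u = u(A, 1)` persists for `|i|`, namely `u_{|i|} - A u_{|i-1|} + u_{|i-2|} = 2 [i = 1]`, these
rows become `2 e_{j-1}`. Column `0` of the result is then `e_1`, and the complementary minor has
first row `(u_1, …, u_{n-1})`, the entry `2` on its subdiagonal and zeros elsewhere; expanding it
along its last column gives `(-1)^(n-2) 2^(n-2) u_{n-1}`.
-/

open Matrix

section shiftDown

variable {R : Type*} [Semiring R] {n p r : ℕ}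

variable (R) in
def shiftDown (n p r : ℕ) : Matrix (Fin n) (Fin n) R :=
  of fun j l => if r ≤ (j : ℕ) ∧ (j : ℕ) = l + p then 1 else 0

theorem shiftDown_mul_apply_of_le (W : Matrix (Fin n) (Fin n) R) {j : Fin n} (k : Fin n)
    (hr : r ≤ j) (hp : p ≤ j) : (shiftDown R n p r * W) j k = W ⟨j - p, by omega⟩ k := by
  rw [mul_apply, Finset.sum_eq_single ⟨j - p, by omega⟩]
  · simp [shiftDown, hr, hp]
  · intro l _ hl
    have : (j : ℕ) ≠ l + p := fun h => hl (Fin.ext (by simp; omega))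
    simp [shiftDown, this]
  · simp

theorem shiftDown_mul_apply_of_lt (W : Matrix (Fin n) (Fin n) R) {j : Fin n} (k : Fin n)
    (hj : (j : ℕ) < r) : (shiftDown R n p r * W) j k = 0 := by
  rw [mul_apply]
  refine Finset.sum_eq_zero fun l _ => ?_
  simp [shiftDown, hj.not_ge]

theorem isLowerTriangular_shiftDown : (shiftDown R n p r).IsLowerTriangular := by
  intro j l hjl
  have : (j : ℕ) < l := hjl
  simp [shiftDown]
  omega

theorem shiftDown_apply_self (hp : 0 < p) (j : Fin n) : shiftDown R n p r j j = 0 := by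
  simp [shiftDown]
  omega

end shiftDown

section

variable {R : Type*} [CommRing R]

theorem det_of_firstRow_subdiagonal {m : ℕ} (v : Fin (m + 1) → R) (d : R) :
    det (of fun i c : Fin (m + 1) =>
        if (i : ℕ) = 0 then v c else if (i : ℕ) = c + 1 then d else 0) =
      (-1) ^ m * v (Fin.last m) * d ^ m := by
  set C : Matrix (Fin (m + 1)) (Fin (m + 1)) R :=
    of fun i c => if (i : ℕ) = 0 then v c else if (i : ℕ) = c + 1 then d else 0
  have hminor : C.submatrix Fin.succ Fin.castSucc = d • 1 := by
    ext i c
    simp only [C, submatrix_apply, of_apply, Fin.val_succ, Fin.val_castSucc, Matrix.smul_apply,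
      one_apply, Fin.ext_iff, Nat.add_right_cancel_iff, Nat.succ_ne_zero, if_false, smul_eq_mul,
      mul_ite, mul_one, mul_zero]
  rw [det_succ_column C (Fin.last m), Finset.sum_eq_single 0]
  · rw [Fin.succAbove_zero, Fin.succAbove_last, hminor, det_smul, det_one]
    simp [C]
  · intro i _ hi
    simp [C, hi, i.is_lt.ne]
  · simp

@[simp] theorem lucasU_zero (x y : R) : lucasU x y 0 = 0 := rfl
@[simp] theorem lucasU_one (x y : R) : lucasU x y 1 = 1 := rfl

theorem lucasU_add_two (x y : R) (n : ℕ) :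
    lucasU x y (n + 2) = x * lucasU x y (n + 1) - y * lucasU x y n := rfl

theorem lucasU_natAbs_recurrence (A : R) (i : ℤ) :
    lucasU A 1 i.natAbs - A * lucasU A 1 (i - 1).natAbs + lucasU A 1 (i - 2).natAbs =
      if i = 1 then 2 else 0 := by
  rcases lt_trichotomy i 1 with hi | rfl | hi
  · obtain ⟨e, rfl⟩ : ∃ e : ℕ, i = -e := ⟨(-i).toNat, by omega⟩
    rw [if_neg (by omega), show (-(e : ℤ)).natAbs = e by omega,
      show (-(e : ℤ) - 1).natAbs = e + 1 by omega, show (-(e : ℤ) - 2).natAbs = e + 2 by omega,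
      lucasU_add_two]
    ring
  · norm_num
  · obtain ⟨d, rfl⟩ : ∃ d : ℕ, i = d + 2 := ⟨(i - 2).toNat, by omega⟩
    rw [if_neg (by omega), show ((d : ℤ) + 2).natAbs = d + 2 by omega,
      show ((d : ℤ) + 2 - 1).natAbs = d + 1 by omega,
      show ((d : ℤ) + 2 - 2).natAbs = d by omega, lucasU_add_two]
    ring

def lucasRowOp (A : R) (n : ℕ) : Matrix (Fin n) (Fin n) R :=
  1 - A • shiftDown R n 1 2 + shiftDown R n 2 2

theorem det_lucasRowOp (A : R) (n : ℕ) : (lucasRowOp A n).det = 1 := by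
  have hA : (A • shiftDown R n 1 2).IsLowerTriangular :=
    fun j l h => by rw [Matrix.smul_apply, isLowerTriangular_shiftDown h, smul_zero]
  rw [lucasRowOp, det_of_isLowerTriangular _
    ((blockTriangular_one.sub hA).add isLowerTriangular_shiftDown)]
  refine Finset.prod_eq_one fun j _ => ?_
  simp [shiftDown_apply_self]

def lucasToeplitz (A : R) (n : ℕ) : Matrix (Fin n) (Fin n) R :=
  of fun j k => lucasU A 1 ((j : ℤ) - k).natAbs

def lucasReduced (A : R) (n : ℕ) : Matrix (Fin n) (Fin n) R :=
  of fun j k =>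
    if (j : ℕ) < 2 then lucasU A 1 ((j : ℤ) - k).natAbs else if (k : ℕ) + 1 = j then 2 else 0

theorem lucasRowOp_mul_lucasToeplitz (A : R) (n : ℕ) :
    lucasRowOp A n * lucasToeplitz A n = lucasReduced A n := by
  ext j k
  simp only [lucasRowOp, add_mul, sub_mul, one_mul, smul_mul, Matrix.add_apply,
    Matrix.sub_apply, Matrix.smul_apply, smul_eq_mul]
  by_cases hj : (j : ℕ) < 2
  · simp only [shiftDown_mul_apply_of_lt _ _ hj, lucasReduced, lucasToeplitz, of_apply, if_pos hj]
    ring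
  · rw [shiftDown_mul_apply_of_le _ _ (by omega) (by omega),
      shiftDown_mul_apply_of_le _ _ (by omega) (by omega)]
    have h1 : (((j - 1 : ℕ) : ℤ) - k) = (j - k) - 1 := by omega
    have h2 : (((j - 2 : ℕ) : ℤ) - k) = (j - k) - 2 := by omega
    simp only [lucasReduced, lucasToeplitz, of_apply, if_neg hj, h1, h2,
      lucasU_natAbs_recurrence]
    exact if_congr (by omega) rfl rfl

theorem det_lucasReduced (A : R) (m : ℕ) :
    (lucasReduced A (m + 2)).det = (-1) ^ (m + 1) * 2 ^ m * lucasU A 1 (m + 1) := by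
  have hminor : (lucasReduced A (m + 2)).submatrix (Fin.succAbove 1) Fin.succ =
      of fun i c : Fin (m + 1) =>
        if (i : ℕ) = 0 then lucasU A 1 (c + 1) else if (i : ℕ) = c + 1 then 2 else 0 := by
    ext i c
    cases i using Fin.cases with
    | zero =>
      simp only [lucasReduced, submatrix_apply, of_apply, Fin.one_succAbove_zero, Fin.val_zero,
        Fin.val_succ, if_true]
      congr 1
    | succ i => simp [lucasReduced, eq_comm]
  have hcol : ∀ i : Fin (m + 2), lucasReduced A (m + 2) i 0 = if i = 1 then 1 else 0 := by
    rintro ⟨_ | _ | i, _⟩ <;> simp [lucasReduced, Fin.ext_iff]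
  rw [det_succ_column_zero]
  simp only [hcol, mul_ite, mul_one, mul_zero, ite_mul, zero_mul, Finset.sum_ite_eq',
    Finset.mem_univ, if_true, hminor, det_of_firstRow_subdiagonal, Fin.val_one, Fin.val_last]
  ring

end

theorem stmt_4 {R : Type*} [CommRing R] (A : R) (n : ℕ) (hn : 2 ≤ n) :
    Matrix.det (Matrix.of fun j k : Fin n => lucasU A 1 ((j : ℤ) - (k : ℤ)).natAbs) =
      (-1) ^ (n - 1) * 2 ^ (n - 2) * lucasU A 1 (n - 1) := by
  obtain ⟨m, rfl⟩ : ∃ m, n = m + 2 := ⟨n - 2, by omega⟩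
  have hdet := congrArg det (lucasRowOp_mul_lucasToeplitz A (m + 2))
  rw [det_mul, det_lucasRowOp, one_mul, det_lucasReduced] at hdet
  rw [Nat.add_sub_cancel, show m + 2 - 1 = m + 1 by omega]
  exact hdet
end

section
/- Let A be an element of a commutative ring R. For any integer n ≥ 2, det[u_{|j−k|}(A,−1)]_{1≤j,k≤n} = (−1)^{n−1}·(2A)^{n−2}. -/
lemma lucasU_rec {R : Type*} [CommRing R] (A : R) (m : ℕ) :
    lucasU A (-1) (m + 2) = A * lucasU A (-1) (m + 1) + lucasU A (-1) m := by
  show A * _ - (-1) * _ = _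
  ring

lemma prod_if_aux {R : Type*} [CommRing R] (c : R) :
    ∀ n, 2 ≤ n → (∏ j ∈ Finset.range n, (if j < 2 then (1:R) else c)) = c ^ (n - 2) := by
  intro n hn
  induction n, hn using Nat.le_induction with
  | base => simp [Finset.prod_range_succ]
  | succ n hn ih =>
    rw [Finset.prod_range_succ, ih, if_neg (by omega)]
    have h : n + 1 - 2 = (n - 2) + 1 := by omega
    rw [h, pow_succ]

theorem stmt_5 {R : Type*} [CommRing R] (A : R) (n : ℕ) (hn : 2 ≤ n) :
    Matrix.det (Matrix.of fun j k : Fin n => lucasU A (-1) ((j : ℤ) - (k : ℤ)).natAbs) =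
      (-1) ^ (n - 1) * (2 * A) ^ (n - 2) := by
  classical
  set u : ℕ → R := lucasU A (-1) with hu
  have hu0 : u 0 = 0 := rfl
  have hu1 : u 1 = 1 := rfl
  have hu2 : u 2 = A := by simp [hu, lucasU]
  have urec : ∀ m, u (m + 2) = A * u (m + 1) + u m := lucasU_rec A
  set M : Matrix (Fin n) (Fin n) R :=
    Matrix.of (fun j k : Fin n => u ((j : ℤ) - (k : ℤ)).natAbs) with hMdef
  set L : Matrix (Fin n) (Fin n) R :=
    Matrix.of (fun j i : Fin n =>
      if i = j then (1 : R)
      else if (i : ℕ) + 1 = (j : ℕ) ∧ 2 ≤ (j : ℕ) then -A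
      else if (i : ℕ) + 2 = (j : ℕ) then -1 else 0) with hLdef
  -- L is upper triangular in the "BlockTriangular toDual" sense? No: L has zeros above diag.
  have hLapp : ∀ j i : Fin n, L j i =
      if i = j then (1 : R)
      else if (i : ℕ) + 1 = (j : ℕ) ∧ 2 ≤ (j : ℕ) then -A
      else if (i : ℕ) + 2 = (j : ℕ) then -1 else 0 := fun j i => rfl
  have hMapp : ∀ j k : Fin n, M j k = u ((j : ℤ) - (k : ℤ)).natAbs := fun j k => rfl
  have hL_tri : L.BlockTriangular OrderDual.toDual := by
    intro i j hij
    have hij' : (i : ℕ) < (j : ℕ) := hij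
    rw [hLapp]
    rw [if_neg (by intro h; rw [h] at hij'; omega), if_neg (by omega), if_neg (by omega)]
  have hdetL : L.det = 1 := by
    rw [Matrix.det_of_lowerTriangular L hL_tri]
    apply Finset.prod_eq_one
    intro i _
    rw [hLapp, if_pos rfl]
  -- product entries
  have hLM_small : ∀ j : Fin n, (j : ℕ) < 2 → ∀ k : Fin n, (L * M) j k = M j k := by
    intro j hj k
    rw [Matrix.mul_apply]
    have h : ∀ i : Fin n, L j i * M i k = if i = j then M j k else 0 := by
      intro i
      by_cases h1 : i = j
      · subst h1; rw [hLapp, if_pos rfl, one_mul, if_pos rfl]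
      · rw [hLapp, if_neg h1, if_neg (by omega), if_neg (by omega), zero_mul, if_neg h1]
    rw [Finset.sum_congr rfl fun i _ => h i, Finset.sum_ite_eq' Finset.univ j,
      if_pos (Finset.mem_univ j)]
  have hLM_big : ∀ j : Fin n, 2 ≤ (j : ℕ) → ∀ k : Fin n,
      (L * M) j k = M j k - A * M ⟨(j : ℕ) - 1, by omega⟩ k - M ⟨(j : ℕ) - 2, by omega⟩ k := by
    intro j hj k
    set j1 : Fin n := ⟨(j : ℕ) - 1, by omega⟩ with hj1
    set j2 : Fin n := ⟨(j : ℕ) - 2, by omega⟩ with hj2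
    have hv1 : (j1 : ℕ) = (j : ℕ) - 1 := rfl
    have hv2 : (j2 : ℕ) = (j : ℕ) - 2 := rfl
    rw [Matrix.mul_apply]
    have h : ∀ i : Fin n, L j i * M i k =
        (if i = j then M j k else 0) + (if i = j1 then -A * M j1 k else 0)
          + (if i = j2 then -M j2 k else 0) := by
      intro i
      have e1 : j1 ≠ j := by intro h; apply absurd (congrArg Fin.val h); simp [hv1]; omega
      have e2 : j2 ≠ j := by intro h; apply absurd (congrArg Fin.val h); simp [hv2]; omega
      have e3 : j2 ≠ j1 := by intro h; apply absurd (congrArg Fin.val h); simp [hv1, hv2]; omega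
      by_cases h1 : i = j
      · subst h1
        rw [hLapp, if_pos rfl, one_mul, if_pos rfl, if_neg (by intro h; exact e1 h.symm),
          if_neg (by intro h; exact e2 h.symm), add_zero, add_zero]
      · by_cases h2 : i = j1
        · subst h2
          rw [hLapp, if_neg h1, if_pos (by constructor <;> omega), if_neg h1, if_pos rfl,
            if_neg (by intro h; exact e3 h.symm)]
          ring
        · by_cases h3 : i = j2
          · subst h3
            rw [hLapp, if_neg h1, if_neg (by push_neg; intro h; omega),
              if_pos (by simp [hv2]; omega), if_neg h1, if_neg h2, if_pos rfl]
            ring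
          · have hv : (i : ℕ) ≠ (j : ℕ) - 1 := by
              intro h; exact h2 (Fin.ext (by rw [h, hv1]))
            have hv' : (i : ℕ) ≠ (j : ℕ) - 2 := by
              intro h; exact h3 (Fin.ext (by rw [h, hv2]))
            rw [hLapp, if_neg h1, if_neg (by push_neg; intro h; omega), if_neg (by omega),
              if_neg h1, if_neg h2, if_neg h3]
            ring
    rw [Finset.sum_congr rfl fun i _ => h i, Finset.sum_add_distrib, Finset.sum_add_distrib,
      Finset.sum_ite_eq' Finset.univ j, Finset.sum_ite_eq' Finset.univ j1,
      Finset.sum_ite_eq' Finset.univ j2, if_pos (Finset.mem_univ _),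
      if_pos (Finset.mem_univ _), if_pos (Finset.mem_univ _)]
    ring
  -- the swap permutation
  set i0 : Fin n := ⟨0, by omega⟩ with hi0
  set i1 : Fin n := ⟨1, by omega⟩ with hi1
  have hne : i0 ≠ i1 := by intro h; exact absurd (congrArg Fin.val h) (by simp [hi0, hi1])
  set σ : Equiv.Perm (Fin n) := Equiv.swap i0 i1 with hσ
  set N : Matrix (Fin n) (Fin n) R := (L * M).submatrix σ id with hN
  have hNapp : ∀ j k : Fin n, N j k = (L * M) (σ j) k := fun j k => rfl
  -- values of N
  have hσ0 : σ i0 = i1 := Equiv.swap_apply_left i0 i1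
  have hσ1 : σ i1 = i0 := Equiv.swap_apply_right i0 i1
  have hσbig : ∀ j : Fin n, 2 ≤ (j : ℕ) → σ j = j := by
    intro j hj
    apply Equiv.swap_apply_of_ne_of_ne
    · intro h; apply absurd (congrArg Fin.val h); simp [hi0]; omega
    · intro h; apply absurd (congrArg Fin.val h); simp [hi1]; omega
  have hN_tri : N.BlockTriangular id := by
    intro j k hkj
    have hkj' : (k : ℕ) < (j : ℕ) := hkj
    rw [hNapp]
    rcases Nat.lt_or_ge (j : ℕ) 2 with hj | hj
    · -- j = 1, k = 0
      have hj1 : j = i1 := Fin.ext (by simp [hi1]; omega)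
      have hk0 : k = i0 := Fin.ext (by simp [hi0]; omega)
      rw [hj1, hσ1, hLM_small i0 (by simp [hi0]), hk0, hMapp]
      simp [hi0, hu0]
    · rw [hσbig j hj, hLM_big j hj k, hMapp, hMapp, hMapp]
      rcases Nat.lt_or_ge (k : ℕ) ((j : ℕ) - 1) with hk | hk
      · -- k ≤ j - 2
        set m : ℕ := (j : ℕ) - 2 - (k : ℕ) with hm
        have e1 : ((j : ℤ) - (k : ℤ)).natAbs = m + 2 := by omega
        have e2 : (((⟨(j : ℕ) - 1, by omega⟩ : Fin n) : ℤ) - (k : ℤ)).natAbs = m + 1 := by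
          simp only [Fin.val_mk]; omega
        have e3 : (((⟨(j : ℕ) - 2, by omega⟩ : Fin n) : ℤ) - (k : ℤ)).natAbs = m := by
          simp only [Fin.val_mk]; omega
        rw [e1, e2, e3, urec m]
        ring
      · -- k = j - 1
        have hk' : (k : ℕ) = (j : ℕ) - 1 := by omega
        have e1 : ((j : ℤ) - (k : ℤ)).natAbs = 1 := by omega
        have e2 : (((⟨(j : ℕ) - 1, by omega⟩ : Fin n) : ℤ) - (k : ℤ)).natAbs = 0 := by
          simp only [Fin.val_mk]; omega
        have e3 : (((⟨(j : ℕ) - 2, by omega⟩ : Fin n) : ℤ) - (k : ℤ)).natAbs = 1 := by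
          simp only [Fin.val_mk]; omega
        rw [e1, e2, e3, hu0, hu1]
        ring
  have hN_diag : ∀ j : Fin n, N j j = if (j : ℕ) < 2 then 1 else -(2 * A) := by
    intro j
    rcases Nat.lt_or_ge (j : ℕ) 2 with hj | hj
    · rw [if_pos hj]
      rcases Nat.lt_or_ge (j : ℕ) 1 with hj0 | hj0
      · have : j = i0 := Fin.ext (by simp [hi0]; omega)
        rw [hNapp, this, hσ0, hLM_small i1 (by simp [hi1]), hMapp]
        have : (((i1 : Fin n) : ℤ) - ((i0 : Fin n) : ℤ)).natAbs = 1 := by simp [hi0, hi1]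
        rw [this, hu1]
      · have : j = i1 := Fin.ext (by simp [hi1]; omega)
        rw [hNapp, this, hσ1, hLM_small i0 (by simp [hi0]), hMapp]
        have : (((i0 : Fin n) : ℤ) - ((i1 : Fin n) : ℤ)).natAbs = 1 := by simp [hi0, hi1]
        rw [this, hu1]
    · rw [if_neg (by omega), hNapp, hσbig j hj, hLM_big j hj j, hMapp, hMapp, hMapp]
      have e1 : ((j : ℤ) - (j : ℤ)).natAbs = 0 := by omega
      have e2 : (((⟨(j : ℕ) - 1, by omega⟩ : Fin n) : ℤ) - (j : ℤ)).natAbs = 1 := by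
        simp only [Fin.val_mk]; omega
      have e3 : (((⟨(j : ℕ) - 2, by omega⟩ : Fin n) : ℤ) - (j : ℤ)).natAbs = 2 := by
        simp only [Fin.val_mk]; omega
      rw [e1, e2, e3, hu0, hu1, hu2]
      ring
  have hdetN : N.det = (-(2 * A)) ^ (n - 2) := by
    rw [Matrix.det_of_upperTriangular hN_tri]
    calc (∏ i : Fin n, N i i) = ∏ i : Fin n, (if (i : ℕ) < 2 then (1 : R) else -(2 * A)) :=
          Finset.prod_congr rfl fun i _ => hN_diag i
      _ = ∏ j ∈ Finset.range n, (if j < 2 then (1 : R) else -(2 * A)) :=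
          (Finset.prod_range fun j => if j < 2 then (1 : R) else -(2 * A)).symm
      _ = (-(2 * A)) ^ (n - 2) := prod_if_aux _ n hn
  have hsign : Equiv.Perm.sign σ = -1 := Equiv.Perm.sign_swap hne
  have hdetN' : N.det = (-1) * M.det := by
    rw [hN, Matrix.det_permute, hsign, Matrix.det_mul, hdetL, one_mul]
    norm_num
  have key : M.det = (-1) ^ (n - 1) * (2 * A) ^ (n - 2) := by
    have h1 : (-1 : R) * M.det = (-(2 * A)) ^ (n - 2) := by rw [← hdetN', hdetN]
    have h2 : M.det = (-1) * (-(2 * A)) ^ (n - 2) := by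
      rw [← h1]; ring
    rw [h2, neg_pow]
    have h3 : (-1 : R) * ((-1) ^ (n - 2) * (2 * A) ^ (n - 2)) =
        (-1) ^ ((n - 2) + 1) * (2 * A) ^ (n - 2) := by
      rw [pow_succ]; ring
    rw [h3]
    congr 2
    omega
  exact key
end

section
/- Let A, B be elements of a commutative ring R. For any integer n ≥ 2, det[v_{|j−k|}(A,B)]_{1≤j,k≤n} = 2·(1−B)^{n−1}·u_n(2(1+B), A^2) + (4B^2 − A^2)·(1−B)^{n−2}·u_{n−1}(2(1+B), A^2). -/
open Matrix

/-- The Toeplitz matrix with entries `v_{|j-k|}`. -/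
def MMat {R : Type*} [CommRing R] (A B : R) (N : ℕ) : Matrix (Fin N) (Fin N) R :=
  Matrix.of fun j k => lucasV A B ((j : ℤ) - (k : ℤ)).natAbs

/-- The value of the determinant, defined by its recurrence. -/
def FF {R : Type*} [CommRing R] (A B : R) : ℕ → R
  | 0 => 2
  | 1 => 4 - A ^ 2
  | m + 2 => 2 * (1 - B ^ 2) * FF A B (m + 1) - A ^ 2 * (1 - B) ^ 2 * FF A B m

section Rec

variable {R : Type*} [CommRing R] (A B : R)

lemma MMat_val {N : ℕ} (j k : Fin N) (t : ℕ)
    (h : (((j : ℕ) : ℤ) - ((k : ℕ) : ℤ)).natAbs = t) :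
    MMat A B N j k = lucasV A B t := by
  simp only [MMat, Matrix.of_apply]
  congr 1

lemma lucasV_clean (t : ℕ) :
    lucasV A B (t + 2) - A * lucasV A B (t + 1) + B * lucasV A B t = 0 := by
  have h : lucasV A B (t + 2) = A * lucasV A B (t + 1) - B * lucasV A B t := rfl
  rw [h]; ring

lemma det_MMat_rec (m : ℕ) :
    (MMat A B (m + 3)).det =
      2 * (1 - B ^ 2) * (MMat A B (m + 2)).det
        - A ^ 2 * (1 - B) ^ 2 * (MMat A B (m + 1)).det := by
  have hv0 : lucasV A B 0 = (2 : R) := rfl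
  have hv1 : lucasV A B 1 = A := rfl
  have hv2 : lucasV A B 2 = A * A - B * 2 := by
    have h : lucasV A B 2 = A * lucasV A B 1 - B * lucasV A B 0 := rfl
    rw [h, hv0, hv1]
  set M : Matrix (Fin (m + 3)) (Fin (m + 3)) R := MMat A B (m + 3) with hM
  set i1 : Fin (m + 3) := ⟨1, by omega⟩ with hi1
  set i2 : Fin (m + 3) := ⟨2, by omega⟩ with hi2
  have h10 : i1 ≠ 0 := by simp [hi1, Fin.ext_iff]
  have h20 : i2 ≠ 0 := by simp [hi2, Fin.ext_iff]
  have c0 : ((0 : Fin (m + 3)) : ℕ) = 0 := rfl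
  have c1 : ((i1 : Fin (m + 3)) : ℕ) = 1 := rfl
  have c2 : ((i2 : Fin (m + 3)) : ℕ) = 2 := rfl
  -- the row-reduced matrix
  set N1 : Matrix (Fin (m + 3)) (Fin (m + 3)) R :=
    M.updateRow 0 (M 0 + (-A) • M i1) with hN1
  set M1 : Matrix (Fin (m + 3)) (Fin (m + 3)) R :=
    N1.updateRow 0 (N1 0 + B • N1 i2) with hM1def
  have detM1 : M1.det = M.det := by
    rw [hM1def, det_updateRow_add_smul_self _ h20.symm,
      hN1, det_updateRow_add_smul_self _ h10.symm]
  have hM1 : ∀ j k, M1 j k =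
      if j = 0 then M 0 k - A * M i1 k + B * M i2 k else M j k := by
    intro j k
    by_cases h : j = 0
    · subst h
      rw [hM1def, updateRow_self, hN1]
      simp only [Pi.add_apply, Pi.smul_apply, smul_eq_mul, updateRow_self,
        updateRow_ne h20, eq_self_iff_true, if_true]
      ring
    · rw [hM1def, updateRow_ne h, hN1, updateRow_ne h, if_neg h]
  -- the column-reduced matrix
  set N2 : Matrix (Fin (m + 3)) (Fin (m + 3)) R :=
    M1.updateCol 0 (fun j => M1 j 0 + (-A) • M1 j i1) with hN2
  set M2 : Matrix (Fin (m + 3)) (Fin (m + 3)) R :=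
    N2.updateCol 0 (fun j => N2 j 0 + B • N2 j i2) with hM2def
  have detM2 : M2.det = M1.det := by
    rw [hM2def, det_updateCol_add_smul_self _ h20.symm,
      hN2, det_updateCol_add_smul_self _ h10.symm]
  have hM2 : ∀ j k, M2 j k =
      if k = 0 then M1 j 0 - A * M1 j i1 + B * M1 j i2 else M1 j k := by
    intro j k
    by_cases h : k = 0
    · subst h
      rw [hM2def, updateCol_self, hN2]
      simp only [smul_eq_mul, updateCol_self, updateCol_ne h20, updateCol_ne h10,
        eq_self_iff_true, if_true]
      ring
    · rw [hM2def, updateCol_ne h, hN2, updateCol_ne h, if_neg h]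
  -- interior entries of M2 agree with M
  have hin : ∀ j k : Fin (m + 3), j ≠ 0 → k ≠ 0 → M2 j k = M j k := by
    intro j k hj hk
    rw [hM2 j k, if_neg hk, hM1 j k, if_neg hj]
  -- values of the new first row of M1
  have row1 : ∀ k : Fin (m + 3), M1 0 k =
      lucasV A B (k : ℕ) - A * lucasV A B (((k : ℕ) : ℤ) - 1).natAbs
        + B * lucasV A B (((k : ℕ) : ℤ) - 2).natAbs := by
    intro k
    rw [hM1, if_pos rfl, hM,
      MMat_val A B (0 : Fin (m + 3)) k ((k : ℕ)) (by rw [c0]; omega),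
      MMat_val A B i1 k ((((k : ℕ) : ℤ) - 1).natAbs) (by rw [c1]; omega),
      MMat_val A B i2 k ((((k : ℕ) : ℤ) - 2).natAbs) (by rw [c2]; omega)]
  -- the first row of M2
  have hrow : ∀ k : Fin (m + 3), M2 0 k =
      if (k : ℕ) = 0 then 2 * (1 - B ^ 2)
      else if (k : ℕ) = 1 then A * (B - 1) else 0 := by
    intro k
    by_cases hk0 : k = 0
    · subst hk0
      rw [hM2, if_pos rfl, row1 0, row1 i1, row1 i2, c0, c1, c2, if_pos rfl]
      have e1 : (((0 : ℕ) : ℤ) - 1).natAbs = 1 := rfl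
      have e2 : (((0 : ℕ) : ℤ) - 2).natAbs = 2 := rfl
      have e3 : (((1 : ℕ) : ℤ) - 1).natAbs = 0 := rfl
      have e4 : (((1 : ℕ) : ℤ) - 2).natAbs = 1 := rfl
      have e5 : (((2 : ℕ) : ℤ) - 1).natAbs = 1 := rfl
      have e6 : (((2 : ℕ) : ℤ) - 2).natAbs = 0 := rfl
      rw [e1, e2, e3, e4, e5, e6, hv0, hv1, hv2]
      ring
    · have hkv : (k : ℕ) ≠ 0 := fun h => hk0 (Fin.ext (by rw [h, c0]))
      rw [hM2 _ k, if_neg hk0, row1 k, if_neg hkv]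
      rcases Nat.lt_or_ge (k : ℕ) 2 with hk | hk
      · have hk1 : (k : ℕ) = 1 := by omega
        have e1 : (((k : ℕ) : ℤ) - 1).natAbs = 0 := by omega
        have e2 : (((k : ℕ) : ℤ) - 2).natAbs = 1 := by omega
        rw [e1, e2, hk1, if_pos rfl, hv0, hv1]
        ring
      · obtain ⟨t, ht⟩ : ∃ t, (k : ℕ) = t + 2 := ⟨(k : ℕ) - 2, by omega⟩
        have e1 : (((k : ℕ) : ℤ) - 1).natAbs = t + 1 := by omega
        have e2 : (((k : ℕ) : ℤ) - 2).natAbs = t := by omega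
        rw [e1, e2, ht, if_neg (by omega)]
        exact lucasV_clean A B t
  -- the first column of M2 below the corner
  have hcol : ∀ j : Fin (m + 3), j ≠ 0 → M2 j 0 =
      if (j : ℕ) = 1 then A * (B - 1) else 0 := by
    intro j hj
    have hjv : (j : ℕ) ≠ 0 := fun h => hj (Fin.ext (by rw [h, c0]))
    rw [hM2, if_pos rfl, hM1 j 0, if_neg hj, hM1 j i1, if_neg hj, hM1 j i2, if_neg hj, hM]
    rcases Nat.lt_or_ge (j : ℕ) 2 with hjlt | hjge
    · have hj1 : (j : ℕ) = 1 := by omega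
      rw [MMat_val A B j (0 : Fin (m + 3)) 1 (by rw [c0]; omega),
        MMat_val A B j i1 0 (by rw [c1]; omega),
        MMat_val A B j i2 1 (by rw [c2]; omega),
        if_pos hj1, hv0, hv1]
      ring
    · obtain ⟨t, ht⟩ : ∃ t, (j : ℕ) = t + 2 := ⟨(j : ℕ) - 2, by omega⟩
      rw [MMat_val A B j (0 : Fin (m + 3)) (t + 2) (by rw [c0]; omega),
        MMat_val A B j i1 (t + 1) (by rw [c1]; omega),
        MMat_val A B j i2 t (by rw [c2]; omega),
        if_neg (by omega)]
      exact lucasV_clean A B t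
  -- the two principal minors
  have hsub1 : M2.submatrix Fin.succ Fin.succ = MMat A B (m + 2) := by
    ext j k
    rw [submatrix_apply, hin _ _ (Fin.succ_ne_zero j) (Fin.succ_ne_zero k), hM,
      MMat_val A B j.succ k.succ ((((j : ℕ) : ℤ) - ((k : ℕ) : ℤ)).natAbs)
        (by rw [Fin.val_succ, Fin.val_succ]; omega)]
    exact (MMat_val A B j k _ rfl).symm
  -- Laplace expansion along the first row
  have hexp := det_succ_row_zero M2
  rw [Fin.sum_univ_succ, Fin.sum_univ_succ] at hexp
  -- the tail of the first-row expansion vanishes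
  have htail : ∀ i : Fin (m + 1),
      (-1 : R) ^ ((i.succ.succ : Fin (m + 3)) : ℕ) * M2 0 i.succ.succ *
        (M2.submatrix Fin.succ (Fin.succAbove i.succ.succ)).det = 0 := by
    intro i
    have hval : ((i.succ.succ : Fin (m + 3)) : ℕ) = (i : ℕ) + 2 := by
      rw [Fin.val_succ, Fin.val_succ]
    rw [hrow, hval, if_neg (by omega), if_neg (by omega)]
    ring
  rw [Finset.sum_congr rfl (fun i _ => htail i), Finset.sum_const_zero, add_zero] at hexp
  -- identify the first minor
  rw [Fin.succAbove_zero, hsub1] at hexp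
  -- now handle the second term
  set s1 : Fin (m + 3) := Fin.succ (0 : Fin (m + 2)) with hs1
  have cs1 : ((s1 : Fin (m + 3)) : ℕ) = 1 := rfl
  have hs10 : s1 ≠ 0 := Fin.succ_ne_zero _
  set minor2 : Matrix (Fin (m + 2)) (Fin (m + 2)) R :=
    M2.submatrix Fin.succ s1.succAbove with hmin2
  -- column values of minor2
  have sA0 : s1.succAbove (0 : Fin (m + 2)) = 0 := by
    rw [Fin.succAbove_of_castSucc_lt]
    · exact Fin.castSucc_zero
    · rw [Fin.lt_def]
      simp [cs1]
  have sAsucc : ∀ c : Fin (m + 1), s1.succAbove c.succ = c.succ.succ := by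
    intro c
    rw [Fin.succAbove_of_le_castSucc]
    rw [Fin.le_def]
    simp [cs1]
  have hmincol : ∀ i : Fin (m + 2), minor2 i 0 = M2 i.succ 0 := by
    intro i
    rw [hmin2, submatrix_apply, sA0]
  have hsub2 : minor2.submatrix Fin.succ Fin.succ = MMat A B (m + 1) := by
    ext j k
    rw [submatrix_apply, hmin2, submatrix_apply, sAsucc,
      hin _ _ (Fin.succ_ne_zero _) (Fin.succ_ne_zero _), hM,
      MMat_val A B j.succ.succ k.succ.succ ((((j : ℕ) : ℤ) - ((k : ℕ) : ℤ)).natAbs)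
        (by rw [Fin.val_succ, Fin.val_succ, Fin.val_succ, Fin.val_succ]; omega)]
    exact (MMat_val A B j k _ rfl).symm
  -- Laplace expansion of minor2 along its first column
  have hexp2 := det_succ_column_zero minor2
  rw [Fin.sum_univ_succ] at hexp2
  have htail2 : ∀ i : Fin (m + 1),
      (-1 : R) ^ ((i.succ : Fin (m + 2)) : ℕ) * minor2 i.succ 0 *
        (minor2.submatrix (Fin.succAbove i.succ) Fin.succ).det = 0 := by
    intro i
    have hval : ((i.succ.succ : Fin (m + 3)) : ℕ) = (i : ℕ) + 2 := by
      rw [Fin.val_succ, Fin.val_succ]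
    rw [hmincol, hcol _ (Fin.succ_ne_zero _), hval, if_neg (by omega)]
    ring
  rw [Finset.sum_congr rfl (fun i _ => htail2 i), Finset.sum_const_zero, add_zero] at hexp2
  rw [Fin.succAbove_zero, hsub2] at hexp2
  have hc10 : minor2 0 0 = A * (B - 1) := by
    rw [hmincol, hcol _ (Fin.succ_ne_zero _)]
    rw [if_pos cs1]
  rw [hc10] at hexp2
  -- entry values in the main expansion
  have h00 : M2 0 0 = 2 * (1 - B ^ 2) := by rw [hrow, c0, if_pos rfl]
  have h01 : M2 0 s1 = A * (B - 1) := by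
    rw [hrow, cs1, if_neg (by omega), if_pos rfl]
  rw [h00, h01, hexp2] at hexp
  rw [← detM1, ← detM2, hexp, cs1]
  simp only [Fin.val_zero]
  ring

lemma det_MMat_one : (MMat A B 1).det = 2 := by
  rw [det_fin_one, MMat_val A B 0 0 0 (by omega)]
  rfl

lemma det_MMat_two : (MMat A B 2).det = 4 - A ^ 2 := by
  have c0 : ((0 : Fin 2) : ℕ) = 0 := rfl
  have c1 : ((1 : Fin 2) : ℕ) = 1 := rfl
  rw [det_fin_two,
    MMat_val A B 0 0 0 (by rw [c0]; omega),
    MMat_val A B 0 1 1 (by rw [c0, c1]; omega),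
    MMat_val A B 1 0 1 (by rw [c0, c1]; omega),
    MMat_val A B 1 1 0 (by rw [c1]; omega)]
  have hv0 : lucasV A B 0 = (2 : R) := rfl
  have hv1 : lucasV A B 1 = A := rfl
  rw [hv0, hv1]
  ring

lemma det_MMat_eq_FF : ∀ m : ℕ, (MMat A B (m + 1)).det = FF A B m := by
  have key : ∀ m : ℕ,
      (MMat A B (m + 1)).det = FF A B m ∧ (MMat A B (m + 2)).det = FF A B (m + 1) := by
    intro m
    induction m with
    | zero =>
      refine ⟨det_MMat_one A B, ?_⟩
      have h2 : (MMat A B 2).det = 4 - A ^ 2 := det_MMat_two A B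
      rw [h2]
      rfl
    | succ k ih =>
      refine ⟨ih.2, ?_⟩
      have h : k + 1 + 2 = k + 3 := rfl
      rw [h, det_MMat_rec, ih.1, ih.2]
      rfl
  exact fun m => (key m).1

lemma FF_formula : ∀ m : ℕ, FF A B (m + 1) =
    2 * (1 - B) ^ (m + 1) * lucasU (2 * (1 + B)) (A ^ 2) (m + 2)
      + (4 * B ^ 2 - A ^ 2) * (1 - B) ^ m * lucasU (2 * (1 + B)) (A ^ 2) (m + 1) := by
  set x : R := 2 * (1 + B) with hx
  set y : R := A ^ 2 with hy
  have hu0 : lucasU x y 0 = 0 := rfl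
  have hu1 : lucasU x y 1 = 1 := rfl
  have hu : ∀ t, lucasU x y (t + 2) = x * lucasU x y (t + 1) - y * lucasU x y t :=
    fun t => rfl
  have key : ∀ m : ℕ,
      (FF A B (m + 1) =
        2 * (1 - B) ^ (m + 1) * lucasU x y (m + 2)
          + (4 * B ^ 2 - A ^ 2) * (1 - B) ^ m * lucasU x y (m + 1)) ∧
      (FF A B (m + 2) =
        2 * (1 - B) ^ (m + 2) * lucasU x y (m + 3)
          + (4 * B ^ 2 - A ^ 2) * (1 - B) ^ (m + 1) * lucasU x y (m + 2)) := by
    intro m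
    induction m with
    | zero =>
      constructor
      · have h1 : FF A B 1 = 4 - A ^ 2 := rfl
        have h2 : lucasU x y 2 = x * lucasU x y 1 - y * lucasU x y 0 := hu 0
        rw [h1, h2, hu0, hu1, hx, hy]
        ring
      · have h1 : FF A B 2 = 2 * (1 - B ^ 2) * FF A B 1 - A ^ 2 * (1 - B) ^ 2 * FF A B 0 := rfl
        have h2 : FF A B 1 = 4 - A ^ 2 := rfl
        have h3 : FF A B 0 = 2 := rfl
        have h4 : lucasU x y 3 = x * lucasU x y 2 - y * lucasU x y 1 := hu 1
        have h5 : lucasU x y 2 = x * lucasU x y 1 - y * lucasU x y 0 := hu 0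
        rw [h1, h2, h3, h4, h5, hu0, hu1, hx, hy]
        ring
    | succ k ih =>
      refine ⟨ih.2, ?_⟩
      have h1 : FF A B (k + 1 + 2) =
          2 * (1 - B ^ 2) * FF A B (k + 2) - A ^ 2 * (1 - B) ^ 2 * FF A B (k + 1) := rfl
      rw [h1, ih.1, ih.2, show k + 1 + 3 = k + 2 + 2 from rfl, hu (k + 2),
        show k + 3 = k + 1 + 2 from rfl, hu (k + 1)]
      ring
  exact fun m => (key m).1

end Rec

theorem stmt_7 {R : Type*} [CommRing R] (A B : R) (n : ℕ) (hn : 2 ≤ n) :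
    Matrix.det (Matrix.of fun j k : Fin n => lucasV A B ((j : ℤ) - (k : ℤ)).natAbs) =
      2 * (1 - B) ^ (n - 1) * lucasU (2 * (1 + B)) (A ^ 2) n
        + (4 * B ^ 2 - A ^ 2) * (1 - B) ^ (n - 2) * lucasU (2 * (1 + B)) (A ^ 2) (n - 1) := by
  obtain ⟨m, rfl⟩ : ∃ m, n = m + 2 := ⟨n - 2, by omega⟩
  have e1 : m + 2 - 1 = m + 1 := by omega
  have e2 : m + 2 - 2 = m := by omega
  rw [e1, e2]
  have hdet : (MMat A B (m + 1 + 1)).det = FF A B (m + 1) := det_MMat_eq_FF A B (m + 1)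
  have : (MMat A B (m + 2)).det =
      2 * (1 - B) ^ (m + 1) * lucasU (2 * (1 + B)) (A ^ 2) (m + 2)
        + (4 * B ^ 2 - A ^ 2) * (1 - B) ^ m * lucasU (2 * (1 + B)) (A ^ 2) (m + 1) := by
    rw [show m + 2 = m + 1 + 1 from rfl, hdet, FF_formula]
  exact this
end

section
/- For any complex number A and any integer n ≥ 3, det[v_{|j−k|}(A,1)]_{1≤j,k≤n} = 0. -/
lemma lucasV_aux (A : ℂ) (m : ℕ) :
    lucasV A 1 ((0 - (m : ℤ)).natAbs) - A * lucasV A 1 ((1 - (m : ℤ)).natAbs)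
      + lucasV A 1 ((2 - (m : ℤ)).natAbs) = 0 := by
  match m with
  | 0 => simp [lucasV]
  | 1 =>
    push_cast
    show lucasV A 1 1 - A * lucasV A 1 0 + lucasV A 1 1 = 0
    simp [lucasV]; ring
  | m + 2 =>
    have h0 : (0 - ((m + 2 : ℕ) : ℤ)).natAbs = m + 2 := by omega
    have h1 : (1 - ((m + 2 : ℕ) : ℤ)).natAbs = m + 1 := by omega
    have h2 : (2 - ((m + 2 : ℕ) : ℤ)).natAbs = m := by omega
    rw [h0, h1, h2]
    show (A * lucasV A 1 (m + 1) - 1 * lucasV A 1 m) - A * lucasV A 1 (m + 1)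
      + lucasV A 1 m = 0
    ring

theorem stmt_8 (A : ℂ) (n : ℕ) (hn : 3 ≤ n) :
    Matrix.det (Matrix.of fun j k : Fin n => lucasV A 1 ((j : ℤ) - (k : ℤ)).natAbs) = 0 := by
  set M : Matrix (Fin n) (Fin n) ℂ :=
    Matrix.of fun j k : Fin n => lucasV A 1 ((j : ℤ) - (k : ℤ)).natAbs with hM
  let i0 : Fin n := ⟨0, by omega⟩
  let i1 : Fin n := ⟨1, by omega⟩
  let i2 : Fin n := ⟨2, by omega⟩
  have h01 : i0 ≠ i1 := by simp [i0, i1, Fin.ext_iff]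
  have h02 : i0 ≠ i2 := by simp [i0, i2, Fin.ext_iff]
  have key : ∀ k : Fin n, M i0 k - A * M i1 k + M i2 k = 0 := by
    intro k
    have := lucasV_aux A (k : ℕ)
    simpa [hM, i0, i1, i2] using this
  set M' : Matrix (Fin n) (Fin n) ℂ := M.updateRow i0 (M i0 + (-A) • M i1) with hM'
  have e1 : M'.det = M.det := Matrix.det_updateRow_add_smul_self M h01 (-A)
  set M'' : Matrix (Fin n) (Fin n) ℂ := M'.updateRow i0 (M' i0 + (1 : ℂ) • M' i2) with hM''
  have e2 : M''.det = M'.det := Matrix.det_updateRow_add_smul_self M' h02 1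
  have hzero : ∀ k, M'' i0 k = 0 := by
    intro k
    have h1 : M' i0 = M i0 + (-A) • M i1 := Matrix.updateRow_self
    have h2 : M' i2 = M i2 := Matrix.updateRow_ne (Ne.symm h02)
    have h3 : M'' i0 = M' i0 + (1 : ℂ) • M' i2 := Matrix.updateRow_self
    have := key k
    simp only [h3, h1, h2, Pi.add_apply, Pi.smul_apply, smul_eq_mul, one_mul]
    linear_combination this
  have : M''.det = 0 := Matrix.det_eq_zero_of_row_eq_zero i0 hzero
  rw [← e1, ← e2, this]
end

section
/- For any complex number A and any integer n ≥ 2, det[v_{|j−k|}(A,−1)]_{1≤j,k≤n} = (−1)^{⌊(n−1)/2⌋}·(2A)^{n−2}·c, where c = 4A if n is odd and c = 4 − A^2 if n is even. -/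
namespace Stmt9Aux

noncomputable def vL (A : ℂ) (n : ℕ) : ℂ := lucasV A (-1) n

lemma vL_zero (A : ℂ) : vL A 0 = 2 := rfl
lemma vL_one (A : ℂ) : vL A 1 = A := rfl

lemma vL_rec (A : ℂ) (n : ℕ) : vL A (n+2) = A * vL A (n+1) + vL A n := by
  have h : lucasV A (-1) (n+2) = A * lucasV A (-1) (n+1) - (-1) * lucasV A (-1) n := rfl
  unfold vL
  rw [h]
  ring

lemma vL_two (A : ℂ) : vL A 2 = A * A + 2 := by
  rw [show (2:ℕ) = 0 + 2 from rfl, vL_rec, vL_zero, vL_one]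

noncomputable def vd (A : ℂ) (j k : ℕ) : ℂ := vL A ((j:ℤ) - (k:ℤ)).natAbs

noncomputable def nf (A : ℂ) (j b : ℕ) : ℂ :=
  if j ≤ 1 then vd A j b
  else if b + 2 ≤ j then 0
  else if b + 1 = j then -2*A
  else -2*A * vL A (b - j + 1)

noncomputable def rf (A : ℂ) (j k : ℕ) : ℂ :=
  if j = k then (if j ≤ 1 then 2 else 0)
  else if j + 1 = k ∨ k + 1 = j then (if j = 0 ∨ k = 0 then A else -2*A)
  else 0

lemma vd_eq_of_ge (A : ℂ) {j k : ℕ} (h : k ≤ j) : vd A j k = vL A (j - k) := by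
  unfold vd; congr 1; omega

lemma vd_eq_of_le (A : ℂ) {j k : ℕ} (h : j ≤ k) : vd A j k = vL A (k - j) := by
  unfold vd; congr 1; omega

lemma nf_base {A : ℂ} {j b : ℕ} (hj : j ≤ 1) : nf A j b = vd A j b := by
  unfold nf; rw [if_pos hj]

lemma nf_lt {A : ℂ} {j b : ℕ} (h : b + 2 ≤ j) : nf A j b = 0 := by
  unfold nf; rw [if_neg (by omega), if_pos h]

lemma nf_eq {A : ℂ} {j b : ℕ} (hj : 2 ≤ j) (h : b + 1 = j) : nf A j b = -2*A := by
  unfold nf; rw [if_neg (by omega), if_neg (by omega), if_pos h]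

lemma nf_ge {A : ℂ} {j b : ℕ} (hj : 2 ≤ j) (h : j ≤ b) : nf A j b = -2*A * vL A (b - j + 1) := by
  unfold nf; rw [if_neg (by omega), if_neg (by omega), if_neg (by omega)]

lemma rf_diag_lo {A : ℂ} {j : ℕ} (h : j ≤ 1) : rf A j j = 2 := by
  unfold rf; rw [if_pos rfl, if_pos h]

lemma rf_diag_hi {A : ℂ} {j : ℕ} (h : 2 ≤ j) : rf A j j = 0 := by
  unfold rf; rw [if_pos rfl, if_neg (by omega)]

lemma rf_adj_zero {A : ℂ} {j k : ℕ} (h : j + 1 = k ∨ k + 1 = j) (h0 : j = 0 ∨ k = 0) :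
    rf A j k = A := by
  unfold rf; rw [if_neg (by omega), if_pos h, if_pos h0]

lemma rf_adj {A : ℂ} {j k : ℕ} (h : j + 1 = k ∨ k + 1 = j) (h0 : j ≠ 0) (h0' : k ≠ 0) :
    rf A j k = -2*A := by
  unfold rf; rw [if_neg (by omega), if_pos h, if_neg (by simp [h0, h0'])]

lemma rf_far {A : ℂ} {j k : ℕ} (h : j ≠ k) (h2 : j + 1 ≠ k) (h3 : k + 1 ≠ j) :
    rf A j k = 0 := by
  unfold rf; rw [if_neg h, if_neg (by simp [h2, h3])]

lemma row_step (A : ℂ) (j b : ℕ) (hj : 2 ≤ j) :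
    vd A j b - A * vd A (j-1) b - vd A (j-2) b = nf A j b := by
  rcases lt_trichotomy (b+1) j with h | h | h
  · obtain ⟨m, hm⟩ : ∃ m, j - b = m + 2 := ⟨j - b - 2, by omega⟩
    rw [vd_eq_of_ge A (by omega), vd_eq_of_ge A (by omega), vd_eq_of_ge A (by omega),
      show j - 1 - b = m + 1 by omega, show j - 2 - b = m by omega, hm, vL_rec,
      nf_lt (by omega)]
    ring
  · rw [vd_eq_of_ge A (by omega), vd_eq_of_ge A (by omega), vd_eq_of_le A (by omega),
      show j - 1 - b = 0 by omega, show b - (j-2) = 1 by omega, show j - b = 1 by omega,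
      vL_zero, vL_one, nf_eq hj h]
    ring
  · rw [vd_eq_of_le A (by omega), vd_eq_of_le A (by omega), vd_eq_of_le A (by omega),
      show b - (j-1) = (b - j) + 1 by omega, show b - (j-2) = (b - j) + 2 by omega, vL_rec,
      nf_ge hj (by omega), show b - j + 1 = (b-j) + 1 from rfl]
    ring

lemma col_base (A : ℂ) (j k : ℕ) (hk : k ≤ 1) : nf A j k = rf A j k := by
  rcases Nat.lt_or_ge j 2 with hj | hj
  · rw [nf_base (by omega)]
    interval_cases j <;> interval_cases k
    · rw [vd_eq_of_ge A le_rfl, vL_zero, rf_diag_lo (by omega)]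
    · rw [vd_eq_of_le A (by omega), vL_one, rf_adj_zero (by omega) (by omega)]
    · rw [vd_eq_of_ge A (by omega), vL_one, rf_adj_zero (by omega) (by omega)]
    · rw [vd_eq_of_ge A le_rfl, show (1:ℕ) - 1 = 0 from rfl, vL_zero, rf_diag_lo (by omega)]
  · rcases Nat.lt_or_ge (k+1) j with h | h
    · rw [nf_lt (by omega), rf_far (by omega) (by omega) (by omega)]
    · have hkj : k + 1 = j := by omega
      rw [nf_eq hj hkj, rf_adj (Or.inr hkj) (by omega) (by omega)]

lemma col_step (A : ℂ) (j k : ℕ) (hk : 2 ≤ k) :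
    nf A j k - A * nf A j (k-1) - nf A j (k-2) = rf A j k := by
  rcases Nat.lt_or_ge j 2 with hj | hj
  · rw [nf_base (by omega), nf_base (by omega), nf_base (by omega)]
    interval_cases j
    · rw [vd_eq_of_le A (by omega), vd_eq_of_le A (by omega), vd_eq_of_le A (by omega),
        show k - 0 = (k-2) + 2 by omega, show k - 1 - 0 = (k-2) + 1 by omega,
        show k - 2 - 0 = k - 2 by omega, vL_rec, rf_far (by omega) (by omega) (by omega)]
      ring
    · rcases Nat.lt_or_ge k 3 with h3 | h3
      · have : k = 2 := by omega
        subst this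
        rw [vd_eq_of_le A (by omega), vd_eq_of_ge A (by omega), vd_eq_of_ge A (by omega)]
        norm_num [vL_zero, vL_one]
        rw [rf_adj (by omega) (by omega) (by omega)]
        ring
      · rw [vd_eq_of_le A (by omega), vd_eq_of_le A (by omega), vd_eq_of_le A (by omega),
          show k - 1 - 1 = (k-3) + 1 by omega, show k - 2 - 1 = k - 3 by omega,
          show k - 1 = (k-3) + 2 by omega, vL_rec, rf_far (by omega) (by omega) (by omega)]
        ring
  · rcases Nat.lt_or_ge (j+2) (k+1) with h | h
    · -- j + 2 ≤ k
      rw [nf_ge hj (by omega), nf_ge hj (by omega), nf_ge hj (by omega),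
        show k - j + 1 = (k-j-1) + 2 by omega, show k - 1 - j + 1 = (k-j-1) + 1 by omega,
        show k - 2 - j + 1 = k - j - 1 by omega, vL_rec,
        rf_far (by omega) (by omega) (by omega)]
      ring
    · rcases lt_trichotomy j k with h2 | h2 | h2
      · -- k = j + 1
        have hk1 : k = j + 1 := by omega
        rw [nf_ge hj (by omega), nf_ge hj (by omega), nf_eq hj (by omega),
          show k - j + 1 = 2 by omega, show k - 1 - j + 1 = 1 by omega, vL_two, vL_one,
          rf_adj (Or.inl hk1.symm) (by omega) (by omega)]
        ring
      · -- k = j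
        subst h2
        rw [nf_ge hj le_rfl, nf_eq hj (by omega), nf_lt (by omega),
          show j - j + 1 = 1 by omega, vL_one, rf_diag_hi hj]
        ring
      · rcases Nat.lt_or_ge (k+1) j with h3 | h3
        · rw [nf_lt (by omega), nf_lt (by omega), nf_lt (by omega),
            rf_far (by omega) (by omega) (by omega)]
          ring
        · have hkj : k + 1 = j := by omega
          rw [nf_eq hj hkj, nf_lt (by omega), nf_lt (by omega),
            rf_adj (Or.inr hkj) (by omega) (by omega)]
          ring



open Matrix Finset

noncomputable def Mmat (A : ℂ) (n : ℕ) : Matrix (Fin n) (Fin n) ℂ :=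
  Matrix.of fun j k : Fin n => vd A (j:ℕ) (k:ℕ)

noncomputable def Rmat (A : ℂ) (n : ℕ) : Matrix (Fin n) (Fin n) ℂ :=
  Matrix.of fun j k : Fin n => rf A (j:ℕ) (k:ℕ)

noncomputable def Smat (A : ℂ) (n : ℕ) : Matrix (Fin n) (Fin n) ℂ :=
  Matrix.of fun j a : Fin n =>
    if (a:ℕ) = (j:ℕ) then 1
    else if (a:ℕ)+1 = (j:ℕ) ∧ 2 ≤ (j:ℕ) then -A
    else if (a:ℕ)+2 = (j:ℕ) then -1 else 0

lemma fin_sum_ite {n : ℕ} (c : ℕ) (hc : c < n) (f : Fin n → ℂ) :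
    (∑ a : Fin n, if (a:ℕ) = c then f a else 0) = f ⟨c, hc⟩ := by
  rw [Finset.sum_eq_single (⟨c, hc⟩ : Fin n)]
  · rw [if_pos rfl]
  · intro b _ hb
    rw [if_neg (fun h => hb (Fin.ext h))]
  · intro h
    exact absurd (Finset.mem_univ _) h

lemma det_Smat (A : ℂ) (n : ℕ) : (Smat A n).det = 1 := by
  have h : (Smat A n).BlockTriangular ⇑OrderDual.toDual := by
    intro i j hij
    have hlt : (i:ℕ) < (j:ℕ) := hij
    show (if (j:ℕ) = (i:ℕ) then 1
      else if (j:ℕ)+1 = (i:ℕ) ∧ 2 ≤ (i:ℕ) then -A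
      else if (j:ℕ)+2 = (i:ℕ) then -1 else 0) = 0
    rw [if_neg (by omega), if_neg (by omega), if_neg (by omega)]
  rw [Matrix.det_of_lowerTriangular _ h]
  apply Finset.prod_eq_one
  intro i _
  show (if (i:ℕ) = (i:ℕ) then 1
      else if (i:ℕ)+1 = (i:ℕ) ∧ 2 ≤ (i:ℕ) then -A
      else if (i:ℕ)+2 = (i:ℕ) then -1 else 0) = 1
  rw [if_pos rfl]

lemma Smat_mul_lo {A : ℂ} {n : ℕ} (X : Matrix (Fin n) (Fin n) ℂ) {j : Fin n}
    (hj : (j:ℕ) ≤ 1) (b : Fin n) : (Smat A n * X) j b = X j b := by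
  rw [Matrix.mul_apply]
  have key : ∀ a : Fin n, Smat A n j a * X a b = (if (a:ℕ) = (j:ℕ) then X a b else 0) := by
    intro a
    show (if (a:ℕ) = (j:ℕ) then 1
      else if (a:ℕ)+1 = (j:ℕ) ∧ 2 ≤ (j:ℕ) then -A
      else if (a:ℕ)+2 = (j:ℕ) then -1 else 0) * X a b = _
    split_ifs with h1 h2 h3
    · ring
    · exfalso; omega
    · exfalso; omega
    · ring
  rw [Finset.sum_congr rfl (fun a _ => key a), fin_sum_ite (j:ℕ) j.isLt]

lemma Smat_mul_hi {A : ℂ} {n : ℕ} (X : Matrix (Fin n) (Fin n) ℂ) {j : Fin n}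
    (hj : 2 ≤ (j:ℕ)) (b : Fin n) :
    (Smat A n * X) j b = X j b
      - A * X ⟨(j:ℕ)-1, (Nat.sub_le _ _).trans_lt j.isLt⟩ b
      - X ⟨(j:ℕ)-2, (Nat.sub_le _ _).trans_lt j.isLt⟩ b := by
  rw [Matrix.mul_apply]
  have key : ∀ a : Fin n, Smat A n j a * X a b =
      (if (a:ℕ) = (j:ℕ) then X a b else 0)
      + ((if (a:ℕ) = (j:ℕ)-1 then -(A * X a b) else 0)
        + (if (a:ℕ) = (j:ℕ)-2 then -(X a b) else 0)) := by
    intro a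
    show (if (a:ℕ) = (j:ℕ) then 1
      else if (a:ℕ)+1 = (j:ℕ) ∧ 2 ≤ (j:ℕ) then -A
      else if (a:ℕ)+2 = (j:ℕ) then -1 else 0) * X a b = _
    split_ifs <;> first | ring1 | (exfalso; omega)
  rw [Finset.sum_congr rfl (fun a _ => key a), Finset.sum_add_distrib,
    Finset.sum_add_distrib, fin_sum_ite (j:ℕ) j.isLt,
    fin_sum_ite ((j:ℕ)-1) ((Nat.sub_le _ _).trans_lt j.isLt),
    fin_sum_ite ((j:ℕ)-2) ((Nat.sub_le _ _).trans_lt j.isLt)]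
  ring

lemma mul_SmatT_lo {A : ℂ} {n : ℕ} (X : Matrix (Fin n) (Fin n) ℂ) {k : Fin n}
    (hk : (k:ℕ) ≤ 1) (j : Fin n) : (X * (Smat A n)ᵀ) j k = X j k := by
  rw [Matrix.mul_apply]
  have key : ∀ b : Fin n, X j b * (Smat A n)ᵀ b k = (if (b:ℕ) = (k:ℕ) then X j b else 0) := by
    intro b
    show X j b * (if (b:ℕ) = (k:ℕ) then 1
      else if (b:ℕ)+1 = (k:ℕ) ∧ 2 ≤ (k:ℕ) then -A
      else if (b:ℕ)+2 = (k:ℕ) then -1 else 0) = _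
    split_ifs <;> first | ring1 | (exfalso; omega)
  rw [Finset.sum_congr rfl (fun b _ => key b), fin_sum_ite (k:ℕ) k.isLt]

lemma mul_SmatT_hi {A : ℂ} {n : ℕ} (X : Matrix (Fin n) (Fin n) ℂ) {k : Fin n}
    (hk : 2 ≤ (k:ℕ)) (j : Fin n) :
    (X * (Smat A n)ᵀ) j k = X j k
      - A * X j ⟨(k:ℕ)-1, (Nat.sub_le _ _).trans_lt k.isLt⟩
      - X j ⟨(k:ℕ)-2, (Nat.sub_le _ _).trans_lt k.isLt⟩ := by
  rw [Matrix.mul_apply]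
  have key : ∀ b : Fin n, X j b * (Smat A n)ᵀ b k =
      (if (b:ℕ) = (k:ℕ) then X j b else 0)
      + ((if (b:ℕ) = (k:ℕ)-1 then -(A * X j b) else 0)
        + (if (b:ℕ) = (k:ℕ)-2 then -(X j b) else 0)) := by
    intro b
    show X j b * (if (b:ℕ) = (k:ℕ) then 1
      else if (b:ℕ)+1 = (k:ℕ) ∧ 2 ≤ (k:ℕ) then -A
      else if (b:ℕ)+2 = (k:ℕ) then -1 else 0) = _
    split_ifs <;> first | ring1 | (exfalso; omega)
  rw [Finset.sum_congr rfl (fun b _ => key b), Finset.sum_add_distrib,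
    Finset.sum_add_distrib, fin_sum_ite (k:ℕ) k.isLt,
    fin_sum_ite ((k:ℕ)-1) ((Nat.sub_le _ _).trans_lt k.isLt),
    fin_sum_ite ((k:ℕ)-2) ((Nat.sub_le _ _).trans_lt k.isLt)]
  ring

lemma SM_eq (A : ℂ) (n : ℕ) :
    Smat A n * Mmat A n = Matrix.of (fun j b : Fin n => nf A (j:ℕ) (b:ℕ)) := by
  ext j b
  show (Smat A n * Mmat A n) j b = nf A (j:ℕ) (b:ℕ)
  rcases Nat.lt_or_ge (j:ℕ) 2 with hj | hj
  · rw [Smat_mul_lo _ (by omega), nf_base (by omega)]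
    rfl
  · rw [Smat_mul_hi _ hj]
    exact row_step A (j:ℕ) (b:ℕ) hj

lemma SMS_eq (A : ℂ) (n : ℕ) :
    Smat A n * Mmat A n * (Smat A n)ᵀ = Rmat A n := by
  rw [SM_eq]
  ext j k
  show (Matrix.of (fun j b : Fin n => nf A (j:ℕ) (b:ℕ)) * (Smat A n)ᵀ) j k = rf A (j:ℕ) (k:ℕ)
  rcases Nat.lt_or_ge (k:ℕ) 2 with hk | hk
  · rw [mul_SmatT_lo _ (by omega)]
    exact col_base A (j:ℕ) (k:ℕ) (by omega)
  · rw [mul_SmatT_hi _ hk]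
    exact col_step A (j:ℕ) (k:ℕ) hk

lemma det_M_eq_det_R (A : ℂ) (n : ℕ) : (Mmat A n).det = (Rmat A n).det := by
  have h := congrArg Matrix.det (SMS_eq A n)
  rwa [Matrix.det_mul, Matrix.det_mul, Matrix.det_transpose, det_Smat, one_mul, mul_one] at h

lemma detR2 (A : ℂ) : (Rmat A 2).det = 4 - A^2 := by
  rw [Matrix.det_fin_two]
  show rf A 0 0 * rf A 1 1 - rf A 0 1 * rf A 1 0 = _
  rw [rf_diag_lo (by omega), rf_diag_lo (by omega), rf_adj_zero (by omega) (by omega),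
    rf_adj_zero (by omega) (by omega)]
  ring

lemma detR3 (A : ℂ) : (Rmat A 3).det = -8*A^2 := by
  rw [Matrix.det_fin_three]
  show rf A 0 0 * rf A 1 1 * rf A 2 2 - rf A 0 0 * rf A 1 2 * rf A 2 1
      - rf A 0 1 * rf A 1 0 * rf A 2 2 + rf A 0 1 * rf A 1 2 * rf A 2 0
      + rf A 0 2 * rf A 1 0 * rf A 2 1 - rf A 0 2 * rf A 1 1 * rf A 2 0 = _
  have e00 : rf A 0 0 = 2 := rf_diag_lo (by omega)
  have e11 : rf A 1 1 = 2 := rf_diag_lo (by omega)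
  have e22 : rf A 2 2 = 0 := rf_diag_hi (by omega)
  have e01 : rf A 0 1 = A := rf_adj_zero (by omega) (by omega)
  have e10 : rf A 1 0 = A := rf_adj_zero (by omega) (by omega)
  have e12 : rf A 1 2 = -2*A := rf_adj (by omega) (by omega) (by omega)
  have e21 : rf A 2 1 = -2*A := rf_adj (by omega) (by omega) (by omega)
  have e02 : rf A 0 2 = 0 := rf_far (by omega) (by omega) (by omega)
  have e20 : rf A 2 0 = 0 := rf_far (by omega) (by omega) (by omega)
  rw [e00, e11, e22, e01, e10, e12, e21, e02, e20]
  ring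

lemma detR_rec (A : ℂ) (k : ℕ) :
    (Rmat A (k+4)).det = -(4*A^2) * (Rmat A (k+2)).det := by
  have hkm : k + 2 < k + 4 := by omega
  have hcol : (⟨k+2, hkm⟩ : Fin (k+4)).succAbove (Fin.last (k+2)) = ⟨k+3, by omega⟩ := by
    rw [Fin.succAbove_of_le_castSucc _ _ (by simp [Fin.le_def])]
    apply Fin.ext
    simp
  have hcol2 : ∀ k' : Fin (k+2),
      (⟨k+2, hkm⟩ : Fin (k+4)).succAbove (Fin.castSucc k') = ⟨(k':ℕ), by omega⟩ := by
    intro k'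
    rw [Fin.succAbove_of_castSucc_lt _ _ (by rw [Fin.lt_def]; simp [k'.isLt])]
    apply Fin.ext
    simp
  rw [Matrix.det_succ_row (Rmat A (k+4)) (Fin.last (k+3)),
    Finset.sum_eq_single (⟨k+2, hkm⟩ : Fin (k+4))]
  rotate_left
  · intro b _ hb
    have hbv : (b:ℕ) ≠ k+2 := fun h => hb (Fin.ext h)
    have hb4 : (b:ℕ) < k+4 := b.isLt
    have hzero : Rmat A (k+4) (Fin.last (k+3)) b = 0 := by
      show rf A ((Fin.last (k+3)):ℕ) (b:ℕ) = 0
      rw [Fin.val_last]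
      by_cases hb3 : (b:ℕ) = k+3
      · rw [hb3]; exact rf_diag_hi (by omega)
      · exact rf_far (by omega) (by omega) (by omega)
    rw [hzero]
    ring
  · intro h
    exact absurd (Finset.mem_univ _) h
  · have hentry : Rmat A (k+4) (Fin.last (k+3)) ⟨k+2, hkm⟩ = -2*A := by
      show rf A ((Fin.last (k+3)):ℕ) (k+2) = -2*A
      rw [Fin.val_last]
      exact rf_adj (Or.inr rfl) (by omega) (by omega)
    have hsign : (-1 : ℂ)^((((Fin.last (k+3)) : Fin (k+4)):ℕ) + ((⟨k+2, hkm⟩ : Fin (k+4)):ℕ)) = -1 := by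
      rw [Fin.val_last, show ((⟨k+2, hkm⟩ : Fin (k+4)):ℕ) = k+2 from rfl,
        show (k+3) + (k+2) = 2*(k+2)+1 by ring, pow_succ, pow_mul]
      norm_num
    rw [hentry, hsign]
    set Q := (Rmat A (k+4)).submatrix (Fin.last (k+3)).succAbove
        (⟨k+2, hkm⟩ : Fin (k+4)).succAbove with hQ
    have hQdet : Q.det = -2*A * (Rmat A (k+2)).det := by
      rw [Matrix.det_succ_column Q (Fin.last (k+2)),
        Finset.sum_eq_single (Fin.last (k+2))]
      rotate_left
      · intro i _ hi
        have hiv : (i:ℕ) ≠ k+2 := by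
          intro h
          exact hi (Fin.ext (by rw [h, Fin.val_last]))
        have hi3 : (i:ℕ) < k+3 := i.isLt
        have hz : Q i (Fin.last (k+2)) = 0 := by
          rw [hQ, Matrix.submatrix_apply, Fin.succAbove_last, hcol]
          show rf A ((Fin.castSucc i : Fin (k+4)):ℕ) (k+3) = 0
          rw [Fin.coe_castSucc]
          exact rf_far (by omega) (by omega) (by omega)
        rw [hz]
        ring
      · intro h
        exact absurd (Finset.mem_univ _) h
      · have hentry2 : Q (Fin.last (k+2)) (Fin.last (k+2)) = -2*A := by
          rw [hQ, Matrix.submatrix_apply, Fin.succAbove_last, hcol]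
          show rf A ((Fin.castSucc (Fin.last (k+2)) : Fin (k+4)):ℕ) (k+3) = -2*A
          rw [Fin.coe_castSucc, Fin.val_last]
          exact rf_adj (Or.inl rfl) (by omega) (by omega)
        have hsign2 : (-1 : ℂ)^((((Fin.last (k+2)) : Fin (k+3)):ℕ) + (((Fin.last (k+2)) : Fin (k+3)):ℕ)) = 1 := by
          rw [Fin.val_last, show (k+2) + (k+2) = 2*(k+2) by ring, pow_mul]
          norm_num
        have hminor : Q.submatrix (Fin.last (k+2)).succAbove (Fin.last (k+2)).succAbove
            = Rmat A (k+2) := by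
          ext j' k'
          rw [Matrix.submatrix_apply, Fin.succAbove_last, hQ, Matrix.submatrix_apply,
            Fin.succAbove_last, hcol2 k']
          show rf A ((Fin.castSucc (Fin.castSucc j') : Fin (k+4)):ℕ) ((k':ℕ)) = rf A (j':ℕ) (k':ℕ)
          rw [Fin.coe_castSucc, Fin.coe_castSucc]
        rw [hentry2, hsign2, hminor]
        ring
    rw [hQdet]
    ring

lemma detR (A : ℂ) (m : ℕ) : (Rmat A (m+2)).det =
    (-1)^((m+1)/2) * (2*A)^m * (if Odd m then 4*A else 4 - A^2) := by
  induction m using Nat.strong_induction_on with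
  | _ m ih =>
    match m with
    | 0 => simpa using detR2 A
    | 1 =>
      rw [show (1+2) = 3 by omega, detR3 A]
      norm_num
      ring
    | (k+2) =>
      rw [show (k+2+2) = (k+4) by omega, detR_rec A k, ih k (by omega),
        show (k+2+1)/2 = (k+1)/2 + 1 by omega]
      have hodd : Odd (k+2) ↔ Odd k := by
        simp [Nat.odd_add]
      by_cases hk : Odd k
      · rw [if_pos hk, if_pos (hodd.mpr hk), pow_succ]
        ring
      · rw [if_neg hk, if_neg (fun hh => hk (hodd.mp hh)), pow_succ]
        ring

end Stmt9Aux

theorem stmt_9 (A : ℂ) (n : ℕ) (hn : 2 ≤ n) :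
    Matrix.det (Matrix.of fun j k : Fin n => lucasV A (-1) ((j : ℤ) - (k : ℤ)).natAbs) =
      (-1) ^ ((n - 1) / 2) * (2 * A) ^ (n - 2) *
        (if Odd n then 4 * A else 4 - A ^ 2) := by
  obtain ⟨m, rfl⟩ : ∃ m, n = m + 2 := ⟨n - 2, by omega⟩
  have hM : (Matrix.of fun j k : Fin (m+2) => lucasV A (-1) ((j : ℤ) - (k : ℤ)).natAbs)
      = Stmt9Aux.Mmat A (m+2) := rfl
  rw [hM, Stmt9Aux.det_M_eq_det_R, Stmt9Aux.detR,
    show (m+2-1) = m+1 by omega, show (m+2-2) = m by omega]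
  have hodd : Odd (m+2) ↔ Odd m := by simp [Nat.odd_add]
  by_cases hk : Odd m
  · rw [if_pos hk, if_pos (hodd.mpr hk)]
  · rw [if_neg hk, if_neg (fun hh => hk (hodd.mp hh))]
end

section
/- Let A, B be elements of a commutative ring R and ε ∈ {1, −1}. Define w_{−1} = ε, w_0 = 1, and w_{n+1} = A·w_n − B·w_{n−1} for n ≥ 0. Then for every positive integer n, det[w_{|j−k|}]_{1≤j,k≤n} = u_n(1 − (A − εB)^2, B^2·(1 + B − εA)^2). -/
/-!
The symmetric Toeplitz matrix `T = [w_{|j-k|}]` is transformed, without changing its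
determinant, by replacing its first row by `R₀ - A R₁ + B R₂` and then its first column likewise.
Since `w_{m+2} - A w_{m+1} + B w_m = 0` for `m ≥ 0`, the new first row and column vanish beyond
their second entries, while the lower right block is again a Toeplitz matrix of the same kind.
Expanding gives the three-term recurrence `D_{n+3} = t D_{n+2} - e² D_{n+1}` with
`t = (1 + A² - B²) w₀ - 2 A w₁` and `e = (1 + B) w₁ - A w₀`. For `w₀ = 1`, `w₁ = A - εB` and
`ε² = 1` these are `t = 1 - (A - εB)²` and `e = -εB (1 + B - εA)`, and `D₁ = 1`,
`D₂ = 1 - w₁²` match the Lucas numbers `u₁`, `u₂`.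
-/

def symmToeplitz {α : Type*} (w : ℤ → α) (n : ℕ) : Matrix (Fin n) (Fin n) α :=
  Matrix.of fun j k => w |(j : ℤ) - (k : ℤ)|

theorem symmToeplitz_submatrix_succ {α : Type*} (w : ℤ → α) (n : ℕ) :
    (symmToeplitz w (n + 1)).submatrix Fin.succ Fin.succ = symmToeplitz w n := by
  ext j k
  simp [symmToeplitz]

section

variable {R : Type*} [CommRing R]

theorem lucasU_add_one_eq_of_recurrence {x y : R} (f : ℕ → R) (h₁ : f 1 = 1) (h₂ : f 2 = x)
    (h : ∀ n, f (n + 3) = x * f (n + 2) - y * f (n + 1)) (n : ℕ) :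
    f (n + 1) = lucasU x y (n + 1) := by
  induction n using Nat.twoStepInduction with
  | zero => simp [h₁, lucasU]
  | one => simp [h₂, lucasU]
  | more n ih₁ ih₂ => rw [h, ih₁, ih₂]; rfl

namespace Matrix

theorem det_updateRow_add_smul_add_smul_self {ι : Type*} [Fintype ι] [DecidableEq ι]
    (M : Matrix ι ι R) {i j k : ι} (hj : i ≠ j) (hk : i ≠ k) (a b : R) :
    (M.updateRow i (M i + a • M j + b • M k)).det = M.det := by
  have h := det_updateRow_add_smul_self (M.updateRow i (M i + a • M j)) hk b
  rwa [updateRow_ne hk.symm, updateRow_self, updateRow_idem,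
    det_updateRow_add_smul_self M hj a] at h

theorem det_updateCol_add_smul_add_smul_self {ι : Type*} [Fintype ι] [DecidableEq ι]
    (M : Matrix ι ι R) {i j k : ι} (hj : i ≠ j) (hk : i ≠ k) (a b : R) :
    (M.updateCol i (fun r => M r i + a • M r j + b • M r k)).det = M.det := by
  rw [← det_transpose, ← updateRow_transpose, ← det_transpose M]
  exact M.transpose.det_updateRow_add_smul_add_smul_self hj hk a b

theorem det_eq_of_head_tridiagonal {n : ℕ} (M : Matrix (Fin (n + 2)) (Fin (n + 2)) R)
    (hrow : ∀ k : Fin n, M 0 k.succ.succ = 0) (hcol : ∀ j : Fin n, M j.succ.succ 0 = 0) :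
    M.det = M 0 0 * (M.submatrix Fin.succ Fin.succ).det -
      M 0 1 * M 1 0 * ((M.submatrix Fin.succ Fin.succ).submatrix Fin.succ Fin.succ).det := by
  have hminor : (M.submatrix Fin.succ (1 : Fin (n + 2)).succAbove).det =
      M 1 0 * ((M.submatrix Fin.succ Fin.succ).submatrix Fin.succ Fin.succ).det := by
    rw [det_succ_column_zero, Fin.sum_univ_succ, Finset.sum_eq_zero fun j _ => ?_]
    · simp [submatrix_submatrix, Function.comp_def]
    · simp [hcol]
  rw [det_succ_row_zero, Fin.sum_univ_succ, Fin.sum_univ_succ, Finset.sum_eq_zero fun k _ => ?_]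
  · simp only [Fin.val_zero, Fin.val_one, pow_zero, pow_one, Fin.succAbove_zero,
      Fin.succ_zero_eq_one, hminor]
    ring
  · simp [hrow]

end Matrix

open Matrix in
theorem det_symmToeplitz_add_three {A B : R} {w : ℤ → R}
    (hrec : ∀ m : ℕ, w (m + 2) = A * w (m + 1) - B * w m) (n : ℕ) :
    (symmToeplitz w (n + 3)).det =
      ((1 + A ^ 2 - B ^ 2) * w 0 - 2 * A * w 1) * (symmToeplitz w (n + 2)).det -
        ((1 + B) * w 1 - A * w 0) ^ 2 * (symmToeplitz w (n + 1)).det := by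
  have hw₂ : w 2 = A * w 1 - B * w 0 := by simpa using hrec 0
  have h01 : (0 : Fin (n + 3)) ≠ 1 := by simp
  have h02 : (0 : Fin (n + 3)) ≠ 2 := by
    simp only [ne_eq, Fin.ext_iff, Fin.val_zero, Fin.val_two]
    omega
  set M := symmToeplitz w (n + 3)
  set M₁ := M.updateRow 0 (M 0 + (-A) • M 1 + B • M 2)
  set M₂ := M₁.updateCol 0 (fun r => M₁ r 0 + (-A) • M₁ r 1 + B • M₁ r 2)
  have hdet : M₂.det = M.det := by
    rw [det_updateCol_add_smul_add_smul_self M₁ h01 h02,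
      det_updateRow_add_smul_add_smul_self M h01 h02]
  have hsub : M₂.submatrix Fin.succ Fin.succ = M.submatrix Fin.succ Fin.succ := by
    ext j k
    simp [M₂, M₁, Fin.succ_ne_zero]
  have hrow : ∀ k : Fin (n + 1), M₂ 0 k.succ.succ = 0 := by
    intro k
    simp only [M₂, M₁, M, symmToeplitz, updateCol_ne (Fin.succ_ne_zero _), updateRow_self,
      Pi.add_apply, Pi.smul_apply, of_apply, Fin.val_zero, Fin.val_one, Fin.val_two, Fin.val_succ,
      smul_eq_mul]
    push_cast
    rw [abs_of_nonpos (by omega), abs_of_nonpos (by omega), abs_of_nonpos (by omega)]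
    linear_combination (norm := ring_nf) hrec k
  have hcol : ∀ j : Fin (n + 1), M₂ j.succ.succ 0 = 0 := by
    intro j
    simp only [M₂, M₁, M, symmToeplitz, updateCol_self, updateRow_ne (Fin.succ_ne_zero _),
      of_apply, Fin.val_zero, Fin.val_one, Fin.val_two, Fin.val_succ, smul_eq_mul]
    push_cast
    rw [abs_of_nonneg (by omega), abs_of_nonneg (by omega), abs_of_nonneg (by omega)]
    linear_combination (norm := ring_nf) hrec j
  have h₀₀ : M₂ 0 0 = (1 + A ^ 2 - B ^ 2) * w 0 - 2 * A * w 1 := by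
    simp only [M₂, M₁, M, symmToeplitz, updateCol_self, updateRow_self, Pi.add_apply,
      Pi.smul_apply, of_apply, Fin.val_zero, Fin.val_one, Fin.val_two, smul_eq_mul]
    norm_num
    linear_combination 2 * B * hw₂
  have h₀₁ : M₂ 0 1 = (1 + B) * w 1 - A * w 0 := by
    simp only [M₂, M₁, M, symmToeplitz, updateCol_ne h01.symm, updateRow_self, Pi.add_apply,
      Pi.smul_apply, of_apply, Fin.val_zero, Fin.val_one, Fin.val_two, smul_eq_mul]
    norm_num
    ring
  have h₁₀ : M₂ 1 0 = (1 + B) * w 1 - A * w 0 := by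
    simp only [M₂, M₁, M, symmToeplitz, updateCol_self, updateRow_ne h01.symm, of_apply,
      Fin.val_zero, Fin.val_one, Fin.val_two, smul_eq_mul]
    norm_num
    ring
  rw [← hdet, det_eq_of_head_tridiagonal M₂ hrow hcol, hsub, symmToeplitz_submatrix_succ,
    symmToeplitz_submatrix_succ, h₀₀, h₀₁, h₁₀]
  ring

end

theorem stmt_11 {R : Type*} [CommRing R] (A B ε : R) (hε : ε = 1 ∨ ε = -1)
    (w : ℤ → R) (hm : w (-1) = ε) (h0 : w 0 = 1)
    (hw : ∀ m : ℕ, w ((m : ℤ) + 1) = A * w m - B * w ((m : ℤ) - 1))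
    (n : ℕ) (hn : 0 < n) :
    Matrix.det (Matrix.of fun j k : Fin n => w |(j : ℤ) - (k : ℤ)|) =
      lucasU (1 - (A - ε * B) ^ 2) (B ^ 2 * (1 + B - ε * A) ^ 2) n := by
  have hε_sq : ε ^ 2 = 1 := by rcases hε with rfl | rfl <;> norm_num
  have hw₁ : w 1 = A - ε * B := by simpa [h0, hm, mul_comm] using hw 0
  have hrec (m : ℕ) : w (m + 2) = A * w (m + 1) - B * w m := by
    simpa [add_assoc, one_add_one_eq_two] using hw (m + 1)
  obtain ⟨n, rfl⟩ := Nat.exists_eq_succ_of_ne_zero hn.ne'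
  refine lucasU_add_one_eq_of_recurrence (fun m => (symmToeplitz w m).det) ?_ ?_ (fun m => ?_) n
  · simp [symmToeplitz, h0]
  · simp [symmToeplitz, Matrix.det_fin_two, h0, hw₁, sq]
  · simp only [det_symmToeplitz_add_three hrec, h0, hw₁]
    linear_combination (B ^ 2 * (symmToeplitz w (m + 2)).det
      - B ^ 2 * ((1 + B) ^ 2 - A ^ 2) * (symmToeplitz w (m + 1)).det) * hε_sq
end

section
/- For any integer n ≥ 2 and elements q, t of a commutative ring R, det[q^{|j−k|} + t]_{1≤j,k≤n} = (1−q)^{n−1}·(1+q)^{n−2}·((n·(1−q) + 2q)·t + q + 1). -/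
/-!
Write the matrix as `K + t • vecMulVec 1 1`, where `K = (q ^ |j - k|)` is the Kac–Murdock–Szegő
matrix. The unit lower bidiagonal matrix `L = 1 - q • S` (`S` the lower shift) has determinant `1`,
and `L * K` is upper triangular with diagonal `(1, 1 - q², …, 1 - q²)`; as `K` is symmetric,
`L * K * Lᵀ` is both upper triangular and symmetric, hence equal to that diagonal. Since
`L *ᵥ 1 = (1, 1 - q, …, 1 - q)`, conjugating by `L` turns the matrix into a diagonal matrix plus a
rank-one matrix, and `det (diagonal d + vecMulVec u v) = ∏ dᵢ + ∑ uᵢ vᵢ ∏_{j ≠ i} dⱼ` holds over any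
commutative ring (add the rank-one part one row at a time).
-/

open Finset Matrix

theorem Fin.prod_univ_erase {M : Type*} [CommMonoid M] {m : ℕ} (f : Fin (m + 1) → M)
    (i : Fin (m + 1)) : ∏ j ∈ univ.erase i, f j = ∏ j : Fin m, f (i.succAbove j) := by
  rw [univ_succAbove m i, erase_cons, prod_map, coe_succAboveEmb]

namespace Matrix

section DiagonalAddVecMulVec

variable {n R : Type*} [Fintype n] [DecidableEq n] [CommRing R]

theorem det_updateRow_diagonal (d v : n → R) (i : n) :
    ((diagonal d).updateRow i v).det = v i * ∏ j ∈ univ.erase i, d j := by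
  rw [← det_transpose, ← updateCol_transpose, diagonal_transpose, ← cramer_apply,
    cramer_eq_adjugate_mulVec, adjugate_diagonal, mulVec_diagonal, mul_comm]

theorem det_one_add_vecMulVec (u v : n → R) : (1 + vecMulVec u v).det = 1 + v ⬝ᵥ u := by
  rw [vecMulVec_eq Unit, det_one_add_replicateCol_mul_replicateRow]

theorem det_diagonal_add_vecMulVec (d u v : n → R) :
    (diagonal d + vecMulVec u v).det = ∏ i, d i + ∑ i, u i * v i * ∏ j ∈ univ.erase i, d j := by
  suffices h : ∀ s : Finset n, (diagonal d + vecMulVec (s.piecewise u 0) v).det =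
      ∏ i, d i + ∑ i ∈ s, u i * v i * ∏ j ∈ univ.erase i, d j by
    simpa using h univ
  intro s
  induction s using Finset.induction_on with
  | empty => simp
  | insert a s ha ih =>
    set x := s.piecewise u 0
    set M := diagonal d + vecMulVec x v
    have hxa : x a = 0 := s.piecewise_eq_of_notMem _ _ ha
    have hinsert : diagonal d + vecMulVec ((insert a s).piecewise u 0) v =
        M.updateRow a (M a + u a • v) := by
      ext i j
      by_cases hi : i = a
      · subst hi; simp [M, hxa, vecMulVec_apply]
      · simp [M, x, hi, vecMulVec_apply, Finset.piecewise_insert_of_ne]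
    -- once row `a` is `v`, the rank-one parts of the other rows are multiples of it
    have hfactor : M.updateRow a v =
        (1 + vecMulVec x (Pi.single a 1)) * (diagonal d).updateRow a v := by
      ext i j
      by_cases hi : i = a
      · subst hi; simp [add_mul, hxa, vecMulVec_mul, vecMulVec_apply]
      · simp [M, hi, add_mul, vecMulVec_mul, vecMulVec_apply]
    rw [hinsert, det_updateRow_add, updateRow_eq_self, det_updateRow_smul, hfactor, det_mul,
      det_one_add_vecMulVec, det_updateRow_diagonal, ih, sum_insert ha]
    simp only [single_dotProduct, hxa, mul_zero, add_zero, one_mul]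
    ring

end DiagonalAddVecMulVec

theorem IsSymm.mul_mul_transpose_eq_diagonal {n R : Type*} [Fintype n] [LinearOrder n]
    [CommRing R] {K L : Matrix n n R} (hK : K.IsSymm) (hL : L.IsLowerTriangular)
    (hL1 : ∀ i, L i i = 1) (hLK : (L * K).IsUpperTriangular) :
    L * K * Lᵀ = diagonal (L * K).diag := by
  have hU : (L * K * Lᵀ).IsUpperTriangular := hLK.mul fun _ _ h => hL h
  have hsymm : (L * K * Lᵀ).IsSymm := by
    simp only [IsSymm, transpose_mul, transpose_transpose, hK.eq, Matrix.mul_assoc]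
  ext i j
  rcases lt_trichotomy i j with h | rfl | h
  · rw [← hsymm.apply, hU h, diagonal_apply_ne _ h.ne]
  · rw [diagonal_apply_eq, diag_apply, mul_apply, sum_eq_single i]
    · rw [transpose_apply, hL1, mul_one]
    · intro r _ hr
      rcases hr.lt_or_gt with hr | hr
      · rw [hLK hr, zero_mul]
      · rw [transpose_apply, hL hr, mul_zero]
    · simp
  · rw [hU h, diagonal_apply_ne _ h.ne']

end Matrix

section KacMurdockSzego

variable {R : Type*} [CommRing R]

def lowerShift (n : ℕ) : Matrix (Fin n) (Fin n) R := of fun j k => if (j : ℕ) = k + 1 then 1 else 0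

def lowerBidiagonal (q : R) (n : ℕ) : Matrix (Fin n) (Fin n) R := 1 - q • lowerShift n

def kmsMatrix (q : R) (n : ℕ) : Matrix (Fin n) (Fin n) R := of fun j k => q ^ ((j : ℤ) - k).natAbs

section
variable (q : R) {m : ℕ}

theorem lowerShift_mulVec_zero (v : Fin (m + 1) → R) : (lowerShift (m + 1) *ᵥ v) 0 = 0 := by
  simp [lowerShift, mulVec, dotProduct]

theorem lowerShift_mulVec_succ (v : Fin (m + 1) → R) (j : Fin m) :
    (lowerShift (m + 1) *ᵥ v) j.succ = v j.castSucc := by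
  have h (k : Fin (m + 1)) : ((j : ℕ) = k) ↔ j.castSucc = k := by
    simp [Fin.ext_iff]
  simp [lowerShift, mulVec, dotProduct, h]

theorem lowerBidiagonal_mulVec_zero (v : Fin (m + 1) → R) :
    (lowerBidiagonal q (m + 1) *ᵥ v) 0 = v 0 := by
  simp [lowerBidiagonal, sub_mulVec, smul_mulVec, lowerShift_mulVec_zero]

theorem lowerBidiagonal_mulVec_succ (v : Fin (m + 1) → R) (j : Fin m) :
    (lowerBidiagonal q (m + 1) *ᵥ v) j.succ = v j.succ - q * v j.castSucc := by
  simp [lowerBidiagonal, sub_mulVec, smul_mulVec, lowerShift_mulVec_succ]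

theorem lowerBidiagonal_mul_apply_zero (M : Matrix (Fin (m + 1)) (Fin (m + 1)) R)
    (k : Fin (m + 1)) : (lowerBidiagonal q (m + 1) * M) 0 k = M 0 k :=
  lowerBidiagonal_mulVec_zero q (fun r => M r k)

theorem lowerBidiagonal_mul_apply_succ (M : Matrix (Fin (m + 1)) (Fin (m + 1)) R) (j : Fin m)
    (k : Fin (m + 1)) :
    (lowerBidiagonal q (m + 1) * M) j.succ k = M j.succ k - q * M j.castSucc k :=
  lowerBidiagonal_mulVec_succ q (fun r => M r k) j

theorem lowerBidiagonal_mulVec_one :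
    lowerBidiagonal q (m + 1) *ᵥ 1 = Fin.cons 1 fun _ => 1 - q := by
  ext j
  cases j using Fin.cases with
  | zero => simp [lowerBidiagonal_mulVec_zero]
  | succ j => simp [lowerBidiagonal_mulVec_succ]

theorem isLowerTriangular_lowerBidiagonal (n : ℕ) : (lowerBidiagonal q n).IsLowerTriangular := by
  intro j k (hjk : j < k)
  have : (j : ℕ) ≠ k + 1 := by have : (j : ℕ) < k := hjk; omega
  simp [lowerBidiagonal, lowerShift, one_apply_ne hjk.ne, this]

theorem lowerBidiagonal_apply_self {n : ℕ} (j : Fin n) : lowerBidiagonal q n j j = 1 := by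
  simp [lowerBidiagonal, lowerShift]

theorem det_lowerBidiagonal (n : ℕ) : (lowerBidiagonal q n).det = 1 := by
  rw [det_of_isLowerTriangular _ (isLowerTriangular_lowerBidiagonal q n)]
  simp [lowerBidiagonal_apply_self]

theorem kmsMatrix_isSymm (n : ℕ) : (kmsMatrix q n).IsSymm := by
  ext j k
  simp only [kmsMatrix, transpose_apply, of_apply]
  rw [← Int.natAbs_neg, neg_sub]

theorem isUpperTriangular_lowerBidiagonal_mul_kmsMatrix :
    (lowerBidiagonal q (m + 1) * kmsMatrix q (m + 1)).IsUpperTriangular := by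
  intro j k (hkj : k < j)
  cases j using Fin.cases with
  | zero => exact absurd hkj (Fin.not_lt_zero k)
  | succ j =>
    have hk : (k : ℕ) ≤ j := Nat.lt_succ_iff.mp hkj
    have : ((j.succ : ℤ) - k).natAbs = ((j.castSucc : ℤ) - k).natAbs + 1 := by
      rw [Fin.val_succ, Fin.val_castSucc]; omega
    rw [lowerBidiagonal_mul_apply_succ]
    simp only [kmsMatrix, of_apply, this, pow_succ]
    ring

theorem diag_lowerBidiagonal_mul_kmsMatrix :
    (lowerBidiagonal q (m + 1) * kmsMatrix q (m + 1)).diag =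
      Fin.cons 1 fun _ => (1 - q) * (1 + q) := by
  ext j
  cases j using Fin.cases with
  | zero => simp [lowerBidiagonal_mul_apply_zero, kmsMatrix]
  | succ j =>
    have h : ((j.castSucc : ℤ) - j.succ).natAbs = 1 := by
      rw [Fin.val_succ, Fin.val_castSucc]; omega
    rw [diag_apply, lowerBidiagonal_mul_apply_succ, Fin.cons_succ]
    simp only [kmsMatrix, of_apply, sub_self, Int.natAbs_zero, h, pow_zero, pow_one]
    ring

theorem lowerBidiagonal_mul_kmsMatrix_add_mul_transpose (t : R) :
    lowerBidiagonal q (m + 1) * (kmsMatrix q (m + 1) + t • vecMulVec 1 1) *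
        (lowerBidiagonal q (m + 1))ᵀ =
      diagonal (Fin.cons 1 fun _ => (1 - q) * (1 + q)) +
        vecMulVec (t • Fin.cons 1 fun _ => 1 - q) (Fin.cons 1 fun _ => 1 - q) := by
  rw [Matrix.mul_add, Matrix.add_mul, IsSymm.mul_mul_transpose_eq_diagonal (kmsMatrix_isSymm q _)
    (isLowerTriangular_lowerBidiagonal q _) (lowerBidiagonal_apply_self q)
    (isUpperTriangular_lowerBidiagonal_mul_kmsMatrix q),
    diag_lowerBidiagonal_mul_kmsMatrix, Matrix.mul_smul, Matrix.smul_mul, mul_vecMulVec,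
    vecMulVec_mul, vecMul_transpose, lowerBidiagonal_mulVec_one, smul_vecMulVec]

end

theorem det_kmsMatrix_add_smul_vecMulVec_one (q t : R) (m : ℕ) :
    (kmsMatrix q (m + 2) + t • vecMulVec 1 1).det =
      (1 - q) ^ (m + 1) * (1 + q) ^ m * (((m + 2 : R) * (1 - q) + 2 * q) * t + q + 1) := by
  have h := congrArg det (lowerBidiagonal_mul_kmsMatrix_add_mul_transpose q t (m := m + 1))
  rw [det_mul, det_mul, det_transpose, det_lowerBidiagonal, one_mul, mul_one,
    det_diagonal_add_vecMulVec] at h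
  rw [h]
  simp only [Fin.prod_univ_succ, Fin.sum_univ_succ, Fin.prod_univ_erase, Fin.cons_zero,
    Fin.cons_succ, Fin.cons_one, Fin.zero_succAbove, Fin.succ_zero_eq_one,
    Fin.succAbove_ne_zero_zero (Fin.succ_ne_zero _), Fin.succ_succAbove_succ, prod_const,
    sum_const, card_univ, Fintype.card_fin, nsmul_eq_mul, Pi.smul_apply, smul_eq_mul, mul_pow]
  push_cast
  ring

end KacMurdockSzego

theorem stmt_12 {R : Type*} [CommRing R] (q t : R) (n : ℕ) (hn : 2 ≤ n) :
    Matrix.det (Matrix.of fun j k : Fin n => q ^ ((j : ℤ) - (k : ℤ)).natAbs + t) =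
      (1 - q) ^ (n - 1) * (1 + q) ^ (n - 2) * (((n : R) * (1 - q) + 2 * q) * t + q + 1) := by
  obtain ⟨m, rfl⟩ : ∃ m, n = m + 2 := ⟨n - 2, by omega⟩
  have hA : (of fun j k : Fin (m + 2) => q ^ ((j : ℤ) - k).natAbs + t) =
      kmsMatrix q (m + 2) + t • vecMulVec 1 1 := by
    ext
    simp [kmsMatrix]
  rw [hA, det_kmsMatrix_add_smul_vecMulVec_one, Nat.add_sub_cancel,
    show m + 2 - 1 = m + 1 by omega]
  push_cast
  ring
end

section
/- For any positive integer n and elements q of a commutative ring R, det[q^{|j−k|} − q^j − q^k + 1]_{1≤j,k≤n} = (1−q^2)^n + n·(1+q)^{n−1}·(1−q)^{n+1}. -/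
open Matrix Finset

section aux

variable {R : Type*} [CommRing R]

theorem sum_two' {α : Type*} [Fintype α] [DecidableEq α]
    (a b : α) (hab : a ≠ b) (ca cb : R) (v : α → R) :
    ∑ x, (if a = x then ca else if b = x then cb else 0) * v x = ca * v a + cb * v b := by
  have : ∀ x, (if a = x then ca else if b = x then cb else 0) * v x
      = (if x = a then ca * v a else 0) + (if x = b then cb * v b else 0) := by
    intro x
    by_cases h1 : x = a
    · subst h1; simp [hab, Ne.symm hab]
    · by_cases h2 : x = b
      · subst h2; simp [h1, Ne.symm h1]
      · simp [Ne.symm h1, Ne.symm h2, h1, h2]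
  rw [Finset.sum_congr rfl fun x _ => this x, Finset.sum_add_distrib]
  simp

theorem sum_one' {α : Type*} [Fintype α] [DecidableEq α]
    (a : α) (ca : R) (v : α → R) :
    ∑ x, (if a = x then ca else 0) * v x = ca * v a := by
  have : ∀ x, (if a = x then ca else 0) * v x = (if x = a then ca * v a else 0) := by
    intro x; by_cases h1 : x = a
    · subst h1; simp
    · simp [h1, Ne.symm h1]
  rw [Finset.sum_congr rfl fun x _ => this x]
  simp

def Amat (q : R) (n : ℕ) : Matrix (Fin n) (Fin n) R :=
  Matrix.of fun j k : Fin n =>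
    q ^ ((j : ℤ) - (k : ℤ)).natAbs - q ^ ((j : ℕ) + 1) - q ^ ((k : ℕ) + 1) + 1

def Lmat (q : R) (m : ℕ) : Matrix (Fin (m+1)) (Fin (m+1)) R :=
  Matrix.of fun j k => if j = k then 1 else if (j : ℕ) = (k : ℕ) + 1 then -q else 0

def Mmat (q : R) (m : ℕ) : Matrix (Fin (m+1)) (Fin (m+1)) R :=
  Matrix.of fun j k => (1 - q)^2 + if j = k then 1 - q^2 else 0

theorem Lrow_zero (q : R) (m : ℕ) (v : Fin (m+1) → R) :
    ∑ x, Lmat q m 0 x * v x = v 0 := by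
  have h : ∀ x, Lmat q m 0 x = if (0 : Fin (m+1)) = x then (1:R) else 0 := by
    intro x
    simp only [Lmat, of_apply, Fin.val_zero]
    by_cases h : (0 : Fin (m+1)) = x <;> simp [h]
  rw [Finset.sum_congr rfl fun x _ => by rw [h x]]
  rw [sum_one']; ring

theorem Lrow_succ (q : R) (m : ℕ) (i : Fin m) (v : Fin (m+1) → R) :
    ∑ x, Lmat q m i.succ x * v x = v i.succ - q * v i.castSucc := by
  have h : ∀ x, Lmat q m i.succ x
      = if i.succ = x then (1:R) else if i.castSucc = x then -q else 0 := by
    intro x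
    have h2 : (((i.succ : Fin (m+1)) : ℕ) = (x : ℕ) + 1) ↔ (i.castSucc = x) := by
      simp only [Fin.val_succ, Fin.ext_iff, Fin.coe_castSucc]
      omega
    simp only [Lmat, of_apply, h2]
  rw [Finset.sum_congr rfl fun x _ => by rw [h x]]
  rw [sum_two' _ _ (by simp [Fin.ext_iff]) 1 (-q) v]; ring

theorem LA_zero (q : R) (m : ℕ) (y : Fin (m+1)) :
    (Lmat q m * Amat q (m+1)) 0 y = Amat q (m+1) 0 y := by
  rw [Matrix.mul_apply]; exact Lrow_zero q m fun x => Amat q (m+1) x y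

theorem LA_succ (q : R) (m : ℕ) (i : Fin m) (y : Fin (m+1)) :
    (Lmat q m * Amat q (m+1)) i.succ y
      = Amat q (m+1) i.succ y - q * Amat q (m+1) i.castSucc y := by
  rw [Matrix.mul_apply]; exact Lrow_succ q m i fun x => Amat q (m+1) x y

theorem key (q : R) (m : ℕ) :
    Lmat q m * Amat q (m+1) * (Lmat q m)ᵀ = Mmat q m := by
  ext j k
  rw [Matrix.mul_apply]
  simp only [transpose_apply]
  rw [Finset.sum_congr rfl fun y _ => mul_comm ((Lmat q m * Amat q (m+1)) j y) (Lmat q m k y)]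
  induction k using Fin.cases with
  | zero =>
    rw [Lrow_zero q m fun y => (Lmat q m * Amat q (m+1)) j y]
    induction j using Fin.cases with
    | zero =>
      rw [LA_zero]
      simp only [Amat, Mmat, of_apply, Fin.val_zero]
      norm_num
      ring
    | succ s =>
      rw [LA_succ]
      simp only [Amat, Mmat, of_apply, Fin.val_zero, Fin.val_succ, Fin.coe_castSucc]
      rw [if_neg (Fin.succ_ne_zero s)]
      have e1 : ((((s:ℕ):ℤ) + 1 - 0).natAbs) = (s:ℕ) + 1 := by omega
      have e2 : ((((s:ℕ):ℤ) - 0).natAbs) = (s:ℕ) := by omega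
      push_cast
      rw [e1, e2]
      ring
  | succ t =>
    rw [Lrow_succ q m t fun y => (Lmat q m * Amat q (m+1)) j y]
    induction j using Fin.cases with
    | zero =>
      rw [LA_zero, LA_zero]
      simp only [Amat, Mmat, of_apply, Fin.val_zero, Fin.val_succ, Fin.coe_castSucc]
      rw [if_neg (Fin.succ_ne_zero t).symm]
      have e1 : (((0:ℤ) - (((t:ℕ):ℤ) + 1)).natAbs) = (t:ℕ) + 1 := by omega
      have e2 : (((0:ℤ) - ((t:ℕ):ℤ)).natAbs) = (t:ℕ) := by omega
      push_cast
      rw [e1, e2]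
      ring
    | succ s =>
      rw [LA_succ, LA_succ]
      simp only [Amat, Mmat, of_apply, Fin.val_succ, Fin.coe_castSucc]
      rcases lt_trichotomy (s:ℕ) (t:ℕ) with hlt | heq | hgt
      · obtain ⟨e, he⟩ : ∃ e, (t:ℕ) = (s:ℕ) + e + 1 := ⟨(t:ℕ) - (s:ℕ) - 1, by omega⟩
        rw [if_neg (by simp [Fin.ext_iff]; omega)]
        have e1 : ((((s:ℕ):ℤ) + 1 - (((t:ℕ):ℤ) + 1)).natAbs) = e + 1 := by omega
        have e2 : ((((s:ℕ):ℤ) - (((t:ℕ):ℤ) + 1)).natAbs) = e + 2 := by omega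
        have e3 : ((((s:ℕ):ℤ) + 1 - ((t:ℕ):ℤ)).natAbs) = e := by omega
        have e4 : ((((s:ℕ):ℤ) - ((t:ℕ):ℤ)).natAbs) = e + 1 := by omega
        push_cast
        rw [e1, e2, e3, e4, he]
        ring
      · rw [if_pos (by simp [Fin.ext_iff]; omega)]
        have e1 : ((((s:ℕ):ℤ) + 1 - (((t:ℕ):ℤ) + 1)).natAbs) = 0 := by omega
        have e2 : ((((s:ℕ):ℤ) - (((t:ℕ):ℤ) + 1)).natAbs) = 1 := by omega
        have e3 : ((((s:ℕ):ℤ) + 1 - ((t:ℕ):ℤ)).natAbs) = 1 := by omega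
        have e4 : ((((s:ℕ):ℤ) - ((t:ℕ):ℤ)).natAbs) = 0 := by omega
        push_cast
        rw [e1, e2, e3, e4, heq]
        ring
      · obtain ⟨e, he⟩ : ∃ e, (s:ℕ) = (t:ℕ) + e + 1 := ⟨(s:ℕ) - (t:ℕ) - 1, by omega⟩
        rw [if_neg (by simp [Fin.ext_iff]; omega)]
        have e1 : ((((s:ℕ):ℤ) + 1 - (((t:ℕ):ℤ) + 1)).natAbs) = e + 1 := by omega
        have e2 : ((((s:ℕ):ℤ) - (((t:ℕ):ℤ) + 1)).natAbs) = e := by omega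
        have e3 : ((((s:ℕ):ℤ) + 1 - ((t:ℕ):ℤ)).natAbs) = e + 2 := by omega
        have e4 : ((((s:ℕ):ℤ) - ((t:ℕ):ℤ)).natAbs) = e + 1 := by omega
        push_cast
        rw [e1, e2, e3, e4, he]
        ring

end aux

section dets

variable {R : Type*} [CommRing R]

def Pmat (R : Type*) [CommRing R] (m : ℕ) : Matrix (Fin (m+1)) (Fin (m+1)) R :=
  Matrix.of fun j k => if j = k then 1 else if (0 : Fin (m+1)) = k then -1 else 0

def Qmat (R : Type*) [CommRing R] (m : ℕ) : Matrix (Fin (m+1)) (Fin (m+1)) R :=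
  Matrix.of fun j k => if k = j then 1 else if k = 0 then 1 else 0

def Tmat (q : R) (m : ℕ) : Matrix (Fin (m+1)) (Fin (m+1)) R :=
  Matrix.of fun j k =>
    if j = k then (if j = 0 then ((m:R)+1)*(1-q)^2 + (1-q^2) else (1-q^2))
    else if j = 0 then (1-q)^2 else 0

theorem Prow_zero (m : ℕ) (v : Fin (m+1) → R) :
    ∑ x, Pmat R m 0 x * v x = v 0 := by
  have h : ∀ x, Pmat R m 0 x = if (0 : Fin (m+1)) = x then (1:R) else 0 := by
    intro x
    simp only [Pmat, of_apply]
    by_cases h : (0 : Fin (m+1)) = x <;> simp [h]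
  rw [Finset.sum_congr rfl fun x _ => by rw [h x]]
  rw [sum_one']; ring

theorem Prow_succ (m : ℕ) (i : Fin m) (v : Fin (m+1) → R) :
    ∑ x, Pmat R m i.succ x * v x = v i.succ - v 0 := by
  have h : ∀ x, Pmat R m i.succ x
      = if i.succ = x then (1:R) else if (0 : Fin (m+1)) = x then -1 else 0 := fun x => rfl
  rw [Finset.sum_congr rfl fun x _ => by rw [h x]]
  rw [sum_two' _ _ (Fin.succ_ne_zero i) 1 (-1) v]; ring

theorem Qcol_zero (m : ℕ) (B : Matrix (Fin (m+1)) (Fin (m+1)) R) (j : Fin (m+1)) :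
    (B * Qmat R m) j 0 = ∑ y, B j y := by
  rw [Matrix.mul_apply]
  apply Finset.sum_congr rfl
  intro y _
  have : Qmat R m y 0 = 1 := by
    simp only [Qmat, of_apply]
    by_cases h : (0 : Fin (m+1)) = y <;> simp [h]
  rw [this, mul_one]

theorem Qcol_succ (m : ℕ) (B : Matrix (Fin (m+1)) (Fin (m+1)) R) (j : Fin (m+1)) (t : Fin m) :
    (B * Qmat R m) j t.succ = B j t.succ := by
  rw [Matrix.mul_apply]
  have h : ∀ y, B j y * Qmat R m y t.succ = (if t.succ = y then (1:R) else 0) * B j y := by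
    intro y
    simp only [Qmat, of_apply, if_neg (Fin.succ_ne_zero t)]
    by_cases h : t.succ = y <;> simp [h]
  rw [Finset.sum_congr rfl fun y _ => h y, sum_one', one_mul]

theorem sumM (q : R) (m : ℕ) (j : Fin (m+1)) :
    ∑ y, Mmat q m j y = ((m:R)+1)*(1-q)^2 + (1-q^2) := by
  simp only [Mmat, of_apply]
  rw [Finset.sum_add_distrib, Finset.sum_const, Finset.sum_ite_eq]
  simp only [Finset.card_univ, Fintype.card_fin, Finset.mem_univ, if_true, nsmul_eq_mul]
  push_cast
  ring

theorem keyT (q : R) (m : ℕ) :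
    Pmat R m * Mmat q m * Qmat R m = Tmat q m := by
  have PM_zero : ∀ y, (Pmat R m * Mmat q m) 0 y = Mmat q m 0 y := by
    intro y; rw [Matrix.mul_apply]; exact Prow_zero m fun x => Mmat q m x y
  have PM_succ : ∀ (i : Fin m) y,
      (Pmat R m * Mmat q m) i.succ y = Mmat q m i.succ y - Mmat q m 0 y := by
    intro i y; rw [Matrix.mul_apply]; exact Prow_succ m i fun x => Mmat q m x y
  ext j k
  induction k using Fin.cases with
  | zero =>
    rw [Qcol_zero]
    induction j using Fin.cases with
    | zero =>
      rw [Finset.sum_congr rfl fun y _ => PM_zero y, sumM]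
      simp [Tmat]
    | succ s =>
      rw [Finset.sum_congr rfl fun y _ => PM_succ s y, Finset.sum_sub_distrib, sumM, sumM]
      simp [Tmat, Fin.succ_ne_zero s, (Fin.succ_ne_zero s)]
  | succ t =>
    rw [Qcol_succ]
    induction j using Fin.cases with
    | zero =>
      rw [PM_zero]
      simp [Tmat, Mmat, (Fin.succ_ne_zero t).symm]
    | succ s =>
      rw [PM_succ]
      simp only [Tmat, Mmat, of_apply, if_neg (Fin.succ_ne_zero t).symm,
        if_neg (Fin.succ_ne_zero s)]
      by_cases h : s.succ = t.succ <;> simp [h]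

theorem detL (q : R) (m : ℕ) : (Lmat q m).det = 1 := by
  rw [Matrix.det_of_lowerTriangular _ (by
    intro i j h
    have hij : i < j := h
    simp only [Lmat, of_apply]
    rw [if_neg (ne_of_lt hij), if_neg (by have := Fin.lt_def.mp hij; omega)])]
  simp [Lmat]

theorem detP (m : ℕ) : (Pmat R m).det = 1 := by
  rw [Matrix.det_of_lowerTriangular _ (by
    intro i j h
    have hij : i < j := h
    simp only [Pmat, of_apply]
    rw [if_neg (ne_of_lt hij), if_neg (by
      have := Fin.lt_def.mp hij
      simp only [Fin.ext_iff, Fin.val_zero]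
      omega)])]
  simp [Pmat]

theorem detQ (m : ℕ) : (Qmat R m).det = 1 := by
  rw [Matrix.det_of_lowerTriangular _ (by
    intro i j h
    have hij : i < j := h
    simp only [Qmat, of_apply]
    rw [if_neg (by exact fun hh => (ne_of_lt hij) hh.symm), if_neg (by
      have := Fin.lt_def.mp hij
      simp only [Fin.ext_iff, Fin.val_zero]
      omega)])]
  simp [Qmat]

theorem detT (q : R) (m : ℕ) :
    (Tmat q m).det = (((m:R)+1)*(1-q)^2 + (1-q^2)) * (1-q^2)^m := by
  rw [Matrix.det_of_upperTriangular (by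
    intro i j h
    have hij : j < i := h
    simp only [Tmat, of_apply]
    rw [if_neg (by exact fun hh => (ne_of_lt hij) hh.symm), if_neg (by
      simp only [Fin.ext_iff, Fin.val_zero]
      have := Fin.lt_def.mp hij
      omega)])]
  rw [Fin.prod_univ_succ]
  have h0 : Tmat q m 0 0 = ((m:R)+1)*(1-q)^2 + (1-q^2) := by simp [Tmat]
  have hs : ∀ i : Fin m, Tmat q m i.succ i.succ = 1 - q^2 := by
    intro i; simp [Tmat, Fin.succ_ne_zero i]
  rw [h0, Finset.prod_congr rfl fun i _ => hs i, Finset.prod_const]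
  simp

end dets

theorem stmt_13 {R : Type*} [CommRing R] (q : R) (n : ℕ) (hn : 0 < n) :
    Matrix.det (Matrix.of fun j k : Fin n =>
        q ^ ((j : ℤ) - (k : ℤ)).natAbs - q ^ ((j : ℕ) + 1) - q ^ ((k : ℕ) + 1) + 1) =
      (1 - q ^ 2) ^ n + (n : R) * (1 + q) ^ (n - 1) * (1 - q) ^ (n + 1) := by
  obtain ⟨m, rfl⟩ : ∃ m, n = m + 1 := ⟨n - 1, by omega⟩
  show (Amat q (m+1)).det = _
  have h1 : (Amat q (m+1)).det = (Mmat q m).det := by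
    have := congrArg Matrix.det (key q m)
    rwa [Matrix.det_mul, Matrix.det_mul, Matrix.det_transpose, detL, one_mul, mul_one] at this
  have h2 : (Mmat q m).det = (Tmat q m).det := by
    have := congrArg Matrix.det (keyT q m)
    rwa [Matrix.det_mul, Matrix.det_mul, detP, detQ, one_mul, mul_one] at this
  rw [h1, h2, detT]
  simp only [Nat.add_sub_cancel]
  have hq : (1 - q^2) = (1+q)*(1-q) := by ring
  rw [hq, mul_pow, mul_pow]
  push_cast
  ring
end

section
/- Let A, B be elements of a commutative ring R, and let (w_n) satisfy w_{n+1} = A·w_n − B·w_{n−1} for n ≥ 1. For any integer n ≥ 2, det[w_{|j−k+1|}]_{1≤j,k≤n} = (w_1^2 − A·w_0·w_1 + B·w_0^2)·((B+1)·w_1 − A·w_0)^{n−2}. -/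
theorem aux14 {R : Type*} [CommRing R] (A B : R) (w : ℕ → R)
    (hw : ∀ m : ℕ, w (m + 2) = A * w (m + 1) - B * w m) :
    ∀ m : ℕ, Matrix.det (Matrix.of fun j k : Fin (m + 2) => w ((j : ℤ) - (k : ℤ) + 1).natAbs) =
      (w 1 ^ 2 - A * w 0 * w 1 + B * w 0 ^ 2) * ((B + 1) * w 1 - A * w 0) ^ m := by
  intro m
  induction m with
  | zero =>
      rw [Matrix.det_fin_two]
      simp only [Matrix.of_apply]
      norm_num
      rw [hw 0]
      ring
  | succ m ih =>
      set c1 : Fin (m + 3) := ⟨1, by omega⟩ with hc1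
      set c2 : Fin (m + 3) := ⟨2, by omega⟩ with hc2
      set N : Matrix (Fin (m + 3)) (Fin (m + 3)) R :=
        Matrix.of fun j k : Fin (m + 3) => w ((j : ℤ) - (k : ℤ) + 1).natAbs with hN
      have h01 : (0 : Fin (m + 3)) ≠ c1 := by simp [hc1, Fin.ext_iff]
      have h02 : (0 : Fin (m + 3)) ≠ c2 := by simp [hc2, Fin.ext_iff]
      have e1 := Matrix.det_updateCol_add_smul_self N h01 (-A)
      set N₁ : Matrix (Fin (m + 3)) (Fin (m + 3)) R :=
        N.updateCol 0 (fun k => N k 0 + (-A) • N k c1) with hN1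
      have e2 := Matrix.det_updateCol_add_smul_self N₁ h02 B
      set N₂ : Matrix (Fin (m + 3)) (Fin (m + 3)) R :=
        N₁.updateCol 0 (fun k => N₁ k 0 + B • N₁ k c2) with hN2
      have hc1z : ((c1 : Fin (m + 3)) : ℤ) = 1 := by simp [hc1]
      have hc2z : ((c2 : Fin (m + 3)) : ℤ) = 2 := by simp [hc2]
      have h0z : (((0 : Fin (m + 3))) : ℤ) = 0 := by simp
      have hN2col : ∀ j : Fin (m + 3), N₂ j 0 = N j 0 - A * N j c1 + B * N j c2 := by
        intro j
        rw [hN2, hN1]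
        simp only [Matrix.updateCol_self, Matrix.updateCol_ne h01.symm,
          Matrix.updateCol_ne h02.symm, smul_eq_mul]
        ring
      have hzero : ∀ j : Fin (m + 3), j ≠ 0 → N₂ j 0 = 0 := by
        intro j hj
        obtain ⟨p, hp⟩ : ∃ p : ℕ, (j : ℕ) = p + 1 := by
          refine ⟨(j : ℕ) - 1, ?_⟩
          have : (j : ℕ) ≠ 0 := fun h => hj (Fin.ext h)
          omega
        have hjz : (j : ℤ) = (p : ℤ) + 1 := by exact_mod_cast congrArg (Nat.cast (R := ℤ)) hp
        rw [hN2col j]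
        simp only [hN, Matrix.of_apply, h0z, hc1z, hc2z]
        have eA : ((j : ℤ) - 0 + 1).natAbs = p + 2 := by omega
        have eB : ((j : ℤ) - 1 + 1).natAbs = p + 1 := by omega
        have eC : ((j : ℤ) - 2 + 1).natAbs = p := by omega
        rw [eA, eB, eC, hw p]
        ring
      have h00 : N₂ 0 0 = w 1 - A * w 0 + B * w 1 := by
        rw [hN2col 0]
        simp only [hN, Matrix.of_apply, h0z, hc1z, hc2z]
        norm_num
      have hsub : N₂.submatrix ((0 : Fin (m + 3)).succAbove) Fin.succ
          = Matrix.of fun j k : Fin (m + 2) => w ((j : ℤ) - (k : ℤ) + 1).natAbs := by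
        ext j k
        have hk : (Fin.succ k : Fin (m + 3)) ≠ 0 := Fin.succ_ne_zero k
        simp only [Matrix.submatrix_apply, Fin.succAbove_zero]
        rw [hN2, hN1]
        simp only [Matrix.updateCol_ne hk, hN, Matrix.of_apply]
        congr 1
        simp only [Fin.val_succ]
        push_cast
        omega
      calc N.det = N₁.det := e1.symm
        _ = N₂.det := e2.symm
        _ = ∑ i : Fin (m + 3), (-1) ^ (i : ℕ) * N₂ i 0 *
              (N₂.submatrix i.succAbove Fin.succ).det := Matrix.det_succ_column_zero N₂
        _ = (-1) ^ ((0 : Fin (m+3)) : ℕ) * N₂ 0 0 *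
              (N₂.submatrix ((0 : Fin (m+3)).succAbove) Fin.succ).det := by
              refine Finset.sum_eq_single 0 (fun i _ hi => ?_) (by simp)
              rw [hzero i hi]; ring
        _ = (w 1 ^ 2 - A * w 0 * w 1 + B * w 0 ^ 2) * ((B + 1) * w 1 - A * w 0) ^ (m + 1) := by
              rw [hsub, ih, h00]
              simp only [Fin.val_zero, pow_zero]
              ring

theorem stmt_14 {R : Type*} [CommRing R] (A B : R) (w : ℕ → R)
    (hw : ∀ m : ℕ, w (m + 2) = A * w (m + 1) - B * w m) (n : ℕ) (hn : 2 ≤ n) :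
    Matrix.det (Matrix.of fun j k : Fin n => w ((j : ℤ) - (k : ℤ) + 1).natAbs) =
      (w 1 ^ 2 - A * w 0 * w 1 + B * w 0 ^ 2) * ((B + 1) * w 1 - A * w 0) ^ (n - 2) := by
  obtain ⟨m, rfl⟩ : ∃ m, n = m + 2 := ⟨n - 2, by omega⟩
  simpa using aux14 A B w hw m
end

section
/- Let A, B be elements of a commutative ring R. For any integer n ≥ 2, det[u_{|j−k+1|}(A,B)]_{1≤j,k≤n} = (B+1)^{n−2} and det[v_{|j−k+1|}(A,B)]_{1≤j,k≤n} = (4B − A^2)·(A·(B−1))^{n−2}. -/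
section Aux

variable {R : Type*} [CommRing R]

lemma sum_mul_ind {n : ℕ} (g : Fin n → R) (c : ℕ) (t : R) :
    (∑ i : Fin n, g i * (if (i : ℕ) = c then t else 0)) =
      (if h : c < n then g ⟨c, h⟩ else 0) * t := by
  split_ifs with h
  · rw [Finset.sum_eq_single (⟨c, h⟩ : Fin n)]
    · simp
    · intro i _ hi
      rw [if_neg, mul_zero]
      intro hc; exact hi (Fin.ext hc)
    · simp
  · rw [zero_mul]
    apply Finset.sum_eq_zero
    intro i _
    rw [if_neg, mul_zero]
    omega

lemma det_toeplitz (A B : R) (f : ℕ → R)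
    (hrec : ∀ d, f (d + 2) = A * f (d + 1) - B * f d) (m : ℕ) :
    Matrix.det (Matrix.of fun j k : Fin (m + 2) => f (((j : ℤ) - (k : ℤ) + 1).natAbs)) =
      (f 1 - A * f 0 + B * f 1) ^ m *
        ((f 1 - A * f 0) * f 1 - f 0 * (f 2 - A * f 1)) := by
  set M : Matrix (Fin (m + 2)) (Fin (m + 2)) R :=
    Matrix.of fun j k : Fin (m + 2) => f (((j : ℤ) - (k : ℤ) + 1).natAbs) with hM
  set U : Matrix (Fin (m + 2)) (Fin (m + 2)) R :=
    Matrix.of fun i k : Fin (m + 2) =>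
      (if (i : ℕ) = (k : ℕ) then (1 : R) else 0) +
      (if (i : ℕ) = (k : ℕ) + 1 then -A else 0) +
      (if (i : ℕ) = (k : ℕ) + 2 then B else 0) with hU
  set N : Matrix (Fin (m + 2)) (Fin (m + 2)) R :=
    Matrix.of fun j k : Fin (m + 2) =>
      M j k * 1 +
      (if h : (k : ℕ) + 1 < m + 2 then M j ⟨(k : ℕ) + 1, h⟩ else 0) * (-A) +
      (if h : (k : ℕ) + 2 < m + 2 then M j ⟨(k : ℕ) + 2, h⟩ else 0) * B with hN
  -- U is lower triangular with unit diagonal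
  have hUdet : U.det = 1 := by
    rw [Matrix.det_of_lowerTriangular U]
    · apply Finset.prod_eq_one
      intro i _
      simp only [hU, Matrix.of_apply]
      rw [if_pos trivial, if_neg (by omega), if_neg (by omega)]
      ring
    · intro i j hij
      have : (i : ℕ) < (j : ℕ) := hij
      simp only [hU, Matrix.of_apply]
      rw [if_neg (by omega), if_neg (by omega), if_neg (by omega)]
      ring
  have hMU : M * U = N := by
    ext j k
    rw [Matrix.mul_apply]
    simp only [hU, hN, Matrix.of_apply, mul_add]
    rw [Finset.sum_add_distrib, Finset.sum_add_distrib,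
      sum_mul_ind (M j) ((k : ℕ)) 1, sum_mul_ind (M j) ((k : ℕ) + 1) (-A),
      sum_mul_ind (M j) ((k : ℕ) + 2) B]
    congr 2
    rw [dif_pos k.isLt]
  have hdet : M.det = N.det := by
    rw [← hMU, Matrix.det_mul, hUdet, mul_one]
  rw [hdet]
  -- reindex to a block matrix
  rw [← Matrix.det_submatrix_equiv_self finSumFinEquiv N]
  set P := N.submatrix finSumFinEquiv finSumFinEquiv with hP
  -- key entry computations
  have hzero : ∀ j k : Fin (m + 2), (k : ℕ) < m → (k : ℕ) < (j : ℕ) → N j k = 0 := by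
    intro j k hk hjk
    simp only [hN, hM, Matrix.of_apply]
    rw [dif_pos (by omega), dif_pos (by omega)]
    have h1 : (((j : ℤ) - (k : ℤ) + 1).natAbs) = ((j : ℕ) - (k : ℕ) - 1) + 2 := by omega
    have h2 : (((j : ℤ) - ((⟨(k : ℕ) + 1, by omega⟩ : Fin (m + 2)) : ℤ) + 1).natAbs)
        = ((j : ℕ) - (k : ℕ) - 1) + 1 := by
      simp only [Fin.val_mk]
      omega
    have h3 : (((j : ℤ) - ((⟨(k : ℕ) + 2, by omega⟩ : Fin (m + 2)) : ℤ) + 1).natAbs)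
        = ((j : ℕ) - (k : ℕ) - 1) := by
      simp only [Fin.val_mk]
      omega
    rw [h1, h2, h3, hrec]
    ring
  have hdiag : ∀ k : Fin (m + 2), (k : ℕ) < m →
      N k k = f 1 - A * f 0 + B * f 1 := by
    intro k hk
    simp only [hN, hM, Matrix.of_apply]
    rw [dif_pos (by omega), dif_pos (by omega)]
    have h1 : (((k : ℤ) - (k : ℤ) + 1).natAbs) = 1 := by omega
    have h2 : (((k : ℤ) - ((⟨(k : ℕ) + 1, by omega⟩ : Fin (m + 2)) : ℤ) + 1).natAbs) = 0 := by
      simp only [Fin.val_mk]; omega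
    have h3 : (((k : ℤ) - ((⟨(k : ℕ) + 2, by omega⟩ : Fin (m + 2)) : ℤ) + 1).natAbs) = 1 := by
      simp only [Fin.val_mk]; omega
    rw [h1, h2, h3]
    ring
  have hcolA : ∀ j k : Fin (m + 2), (k : ℕ) = m →
      N j k = f (((j : ℤ) - (k : ℤ) + 1).natAbs) - A * f (((j : ℤ) - (k : ℤ)).natAbs) := by
    intro j k hk
    simp only [hN, hM, Matrix.of_apply]
    rw [dif_pos (by omega), dif_neg (by omega)]
    have h2 : (((j : ℤ) - ((⟨(k : ℕ) + 1, by omega⟩ : Fin (m + 2)) : ℤ) + 1).natAbs)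
        = ((j : ℤ) - (k : ℤ)).natAbs := by
      simp only [Fin.val_mk]; omega
    rw [h2]
    ring
  have hcolB : ∀ j k : Fin (m + 2), (k : ℕ) = m + 1 →
      N j k = f (((j : ℤ) - (k : ℤ) + 1).natAbs) := by
    intro j k hk
    simp only [hN, hM, Matrix.of_apply]
    rw [dif_neg (by omega), dif_neg (by omega)]
    ring
  -- block decomposition
  rw [← Matrix.fromBlocks_toBlocks P]
  have h21 : P.toBlocks₂₁ = 0 := by
    ext i k
    simp only [Matrix.toBlocks₂₁, hP, Matrix.submatrix_apply, Matrix.of_apply,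
      Matrix.zero_apply]
    apply hzero
    · simp [finSumFinEquiv]
    · simp [finSumFinEquiv]
      omega
  rw [h21, Matrix.det_fromBlocks_zero₂₁]
  have hT : (P.toBlocks₁₁).det = (f 1 - A * f 0 + B * f 1) ^ m := by
    rw [Matrix.det_of_upperTriangular (M := P.toBlocks₁₁)]
    · trans (∏ _i : Fin m, (f 1 - A * f 0 + B * f 1))
      · apply Finset.prod_congr rfl
        intro i _
        simp only [Matrix.toBlocks₁₁, hP, Matrix.submatrix_apply, Matrix.of_apply]
        apply hdiag
        simp [finSumFinEquiv]
      · simp [Finset.prod_const]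
    · intro i j hij
      have hij' : (j : ℕ) < (i : ℕ) := hij
      simp only [Matrix.toBlocks₁₁, hP, Matrix.submatrix_apply, Matrix.of_apply]
      apply hzero
      · simp [finSumFinEquiv]
      · simp [finSumFinEquiv]
        exact hij'
  have hj0 : ((finSumFinEquiv (Sum.inr (0 : Fin 2)) : Fin (m + 2)) : ℕ) = m := by
    simp [finSumFinEquiv]
  have hj1 : ((finSumFinEquiv (Sum.inr (1 : Fin 2)) : Fin (m + 2)) : ℕ) = m + 1 := by
    simp [finSumFinEquiv]
  have hC : (P.toBlocks₂₂).det = (f 1 - A * f 0) * f 1 - f 0 * (f 2 - A * f 1) := by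
    rw [Matrix.det_fin_two]
    simp only [Matrix.toBlocks₂₂, hP, Matrix.submatrix_apply, Matrix.of_apply]
    rw [hcolA _ _ hj0, hcolB _ _ hj1, hcolA _ _ hj0, hcolB _ _ hj1]
    rw [show ((((finSumFinEquiv (Sum.inr (0 : Fin 2)) : Fin (m + 2)) : ℤ)
        - ((finSumFinEquiv (Sum.inr (0 : Fin 2)) : Fin (m + 2)) : ℤ) + 1).natAbs) = 1
      by omega]
    rw [show ((((finSumFinEquiv (Sum.inr (0 : Fin 2)) : Fin (m + 2)) : ℤ)
        - ((finSumFinEquiv (Sum.inr (0 : Fin 2)) : Fin (m + 2)) : ℤ)).natAbs) = 0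
      by omega]
    rw [show ((((finSumFinEquiv (Sum.inr (0 : Fin 2)) : Fin (m + 2)) : ℤ)
        - ((finSumFinEquiv (Sum.inr (1 : Fin 2)) : Fin (m + 2)) : ℤ) + 1).natAbs) = 0
      by omega]
    rw [show ((((finSumFinEquiv (Sum.inr (1 : Fin 2)) : Fin (m + 2)) : ℤ)
        - ((finSumFinEquiv (Sum.inr (0 : Fin 2)) : Fin (m + 2)) : ℤ) + 1).natAbs) = 2
      by omega]
    rw [show ((((finSumFinEquiv (Sum.inr (1 : Fin 2)) : Fin (m + 2)) : ℤ)
        - ((finSumFinEquiv (Sum.inr (0 : Fin 2)) : Fin (m + 2)) : ℤ)).natAbs) = 1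
      by omega]
    rw [show ((((finSumFinEquiv (Sum.inr (1 : Fin 2)) : Fin (m + 2)) : ℤ)
        - ((finSumFinEquiv (Sum.inr (1 : Fin 2)) : Fin (m + 2)) : ℤ) + 1).natAbs) = 1
      by omega]
  rw [hT, hC]

end Aux

theorem stmt_15 {R : Type*} [CommRing R] (A B : R) (n : ℕ) (hn : 2 ≤ n) :
    Matrix.det (Matrix.of fun j k : Fin n => lucasU A B ((j : ℤ) - (k : ℤ) + 1).natAbs) =
        (B + 1) ^ (n - 2) ∧
    Matrix.det (Matrix.of fun j k : Fin n => lucasV A B ((j : ℤ) - (k : ℤ) + 1).natAbs) =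
        (4 * B - A ^ 2) * (A * (B - 1)) ^ (n - 2) := by
  obtain ⟨m, rfl⟩ : ∃ m, n = m + 2 := ⟨n - 2, by omega⟩
  constructor
  · rw [det_toeplitz A B (lucasU A B) (fun d => rfl) m]
    simp only [Nat.add_sub_cancel]
    show (lucasU A B 1 - A * lucasU A B 0 + B * lucasU A B 1) ^ m *
      ((lucasU A B 1 - A * lucasU A B 0) * lucasU A B 1
        - lucasU A B 0 * (lucasU A B 2 - A * lucasU A B 1)) = (B + 1) ^ m
    simp only [lucasU]
    ring
  · rw [det_toeplitz A B (lucasV A B) (fun d => rfl) m]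
    simp only [Nat.add_sub_cancel]
    show (lucasV A B 1 - A * lucasV A B 0 + B * lucasV A B 1) ^ m *
      ((lucasV A B 1 - A * lucasV A B 0) * lucasV A B 1
        - lucasV A B 0 * (lucasV A B 2 - A * lucasV A B 1)) =
      (4 * B - A ^ 2) * (A * (B - 1)) ^ m
    simp only [lucasV]
    ring
end

section
/- For any positive integer n and element q of a commutative ring R, det[q^{|j−k|} + δ_{jk}]_{1≤j,k≤n} = u_{n+1}(2, q^2) and det[q^{|j−k|} − δ_{jk}]_{1≤j,k≤n} = (−1)^{n−1}·q^n·u_{n−1}(2q, 1). -/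
section Aux

open Matrix

variable {R : Type*} [CommRing R]

def SB (R : Type*) [CommRing R] (n : ℕ) : Matrix (Fin n) (Fin n) R :=
  Matrix.of fun j k => if (j : ℕ) = (k : ℕ) + 1 then 1 else 0

lemma coe_succAbove {n : ℕ} (i : Fin (n+1)) (b : Fin n) :
    ((i.succAbove b : Fin (n+1)) : ℕ) = if (b : ℕ) < (i : ℕ) then (b : ℕ) else (b : ℕ) + 1 := by
  unfold Fin.succAbove
  split_ifs with h1 h2 h3 <;> simp_all [Fin.lt_def]

lemma det_BB {n : ℕ} (q : R) :
    ((1 : Matrix (Fin n) (Fin n) R) - q • SB R n).det = 1 := by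
  rw [Matrix.det_of_lowerTriangular]
  · apply Finset.prod_eq_one
    intro i _
    simp [SB, Matrix.one_apply, Matrix.sub_apply]
  · intro i j h
    have hij : i < j := OrderDual.toDual_lt_toDual.mp h
    have h1 : i ≠ j := fun hc => by rw [hc] at hij; exact lt_irrefl _ hij
    have h2 : (i : ℕ) ≠ (j : ℕ) + 1 := by
      have := Fin.lt_def.mp hij; omega
    simp [SB, Matrix.one_apply, Matrix.sub_apply, h1, h2]

lemma SB_mul {n : ℕ} (Y : Matrix (Fin n) (Fin n) R) (j k : Fin n) :
    (SB R n * Y) j k = if h : 0 < (j : ℕ) then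
      Y ⟨(j : ℕ) - 1, Nat.lt_of_le_of_lt (Nat.pred_le _) j.2⟩ k else 0 := by
  rw [Matrix.mul_apply]
  split_ifs with h
  · rw [Finset.sum_eq_single (⟨(j : ℕ) - 1, Nat.lt_of_le_of_lt (Nat.pred_le _) j.2⟩ : Fin n)]
    · simp only [SB, Matrix.of_apply]
      rw [if_pos (by omega), one_mul]
    · intro l _ hl
      have : (j : ℕ) ≠ (l : ℕ) + 1 := fun hc => hl (Fin.ext (by simp; omega))
      simp [SB, this]
    · simp
  · apply Finset.sum_eq_zero
    intro l _
    have : (j : ℕ) ≠ (l : ℕ) + 1 := by omega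
    simp [SB, this]

lemma mul_SBt {n : ℕ} (Y : Matrix (Fin n) (Fin n) R) (j k : Fin n) :
    (Y * (SB R n)ᵀ) j k = if h : 0 < (k : ℕ) then
      Y j ⟨(k : ℕ) - 1, Nat.lt_of_le_of_lt (Nat.pred_le _) k.2⟩ else 0 := by
  rw [Matrix.mul_apply]
  split_ifs with h
  · rw [Finset.sum_eq_single (⟨(k : ℕ) - 1, Nat.lt_of_le_of_lt (Nat.pred_le _) k.2⟩ : Fin n)]
    · simp only [SB, Matrix.transpose_apply, Matrix.of_apply]
      rw [if_pos (by omega), mul_one]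
    · intro l _ hl
      have : (k : ℕ) ≠ (l : ℕ) + 1 := fun hc => hl (Fin.ext (by simp; omega))
      simp [SB, this]
    · simp
  · apply Finset.sum_eq_zero
    intro l _
    have : (k : ℕ) ≠ (l : ℕ) + 1 := by omega
    simp [SB, this]


def ment (q e : R) (a b : ℕ) : R :=
  q ^ ((a : ℤ) - (b : ℤ)).natAbs + e * (if a = b then 1 else 0)

def tent (q e : R) (a b : ℕ) : R :=
  if a = b then (if a = 0 then 1 + e else 1 - q ^ 2 + e * (1 + q ^ 2))
  else if a = b + 1 ∨ b = a + 1 then -(q * e) else 0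

lemma entry_key (q e : R) (a b : ℕ) :
    ment q e a b - q * (if 0 < a then ment q e (a - 1) b else 0)
      - q * (if 0 < b then ment q e a (b - 1) else 0)
      + q * q * (if 0 < a ∧ 0 < b then ment q e (a - 1) (b - 1) else 0)
    = tent q e a b := by
  unfold ment tent
  rcases Nat.eq_zero_or_pos a with ha | ha
  · subst ha
    rcases Nat.eq_zero_or_pos b with hb | hb
    · subst hb
      norm_num
    · rcases Nat.lt_or_ge b 2 with hb2 | hb2
      · have hb1 : b = 1 := by omega
        subst hb1
        have e1 : (((0:ℕ) : ℤ) - ((1:ℕ) : ℤ)).natAbs = 1 := by omega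
        have e2 : (((0:ℕ) : ℤ) - (((1:ℕ) - 1 : ℕ) : ℤ)).natAbs = 0 := by omega
        rw [e1, e2]
        norm_num
        ring
      · obtain ⟨c, rfl⟩ : ∃ c, b = c + 2 := ⟨b - 2, by omega⟩
        have e1 : (((0:ℕ) : ℤ) - ((c + 2 : ℕ) : ℤ)).natAbs = c + 2 := by omega
        have e2 : (((0:ℕ) : ℤ) - (((c + 2 : ℕ) - 1 : ℕ) : ℤ)).natAbs = c + 1 := by omega
        rw [e1, e2]
        simp only [if_pos hb,
          if_neg (show ¬ (0:ℕ) = c + 2 from by omega),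
          if_neg (show ¬ (0:ℕ) = c + 2 - 1 from by omega),
          if_neg (show ¬ (0 < (0:ℕ)) from by omega),
          if_neg (show ¬ (0 < (0:ℕ) ∧ 0 < c + 2) from by omega),
          if_neg (show ¬ ((0:ℕ) = c + 2 + 1 ∨ c + 2 = 0 + 1) from by omega),
          if_pos (rfl : (0:ℕ) = 0)]
        ring
  · rcases Nat.eq_zero_or_pos b with hb | hb
    · subst hb
      rcases Nat.lt_or_ge a 2 with ha2 | ha2
      · have ha1 : a = 1 := by omega
        subst ha1
        have e1 : (((1:ℕ) : ℤ) - ((0:ℕ) : ℤ)).natAbs = 1 := by omega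
        have e2 : ((((1:ℕ) - 1 : ℕ) : ℤ) - ((0:ℕ) : ℤ)).natAbs = 0 := by omega
        rw [e1, e2]
        norm_num
        ring
      · obtain ⟨c, rfl⟩ : ∃ c, a = c + 2 := ⟨a - 2, by omega⟩
        have e1 : (((c + 2 : ℕ) : ℤ) - ((0:ℕ) : ℤ)).natAbs = c + 2 := by omega
        have e2 : ((((c + 2 : ℕ) - 1 : ℕ) : ℤ) - ((0:ℕ) : ℤ)).natAbs = c + 1 := by omega
        rw [e1, e2]
        simp only [if_pos ha,
          if_neg (show ¬ (c + 2 : ℕ) = 0 from by omega),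
          if_neg (show ¬ (c + 2 - 1 : ℕ) = 0 from by omega),
          if_neg (show ¬ (0 < (0:ℕ)) from by omega),
          if_neg (show ¬ (0 < c + 2 ∧ 0 < (0:ℕ)) from by omega),
          if_neg (show ¬ ((c + 2 : ℕ) = 0 + 1 ∨ (0:ℕ) = c + 2 + 1) from by omega)]
        try simp
        try ring
    · have hab' : 0 < a ∧ 0 < b := ⟨ha, hb⟩
      rcases Nat.lt_trichotomy a b with hab | hab | hab
      · rcases Nat.lt_or_ge b (a + 2) with h2 | h2
        · have hb1 : b = a + 1 := by omega
          subst hb1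
          have e1 : ((a : ℤ) - ((a + 1 : ℕ) : ℤ)).natAbs = 1 := by omega
          have e2 : (((a - 1 : ℕ) : ℤ) - ((a + 1 : ℕ) : ℤ)).natAbs = 2 := by omega
          have e3 : ((a : ℤ) - (((a + 1 : ℕ) - 1 : ℕ) : ℤ)).natAbs = 0 := by omega
          have e4 : (((a - 1 : ℕ) : ℤ) - (((a + 1 : ℕ) - 1 : ℕ) : ℤ)).natAbs = 1 := by omega
          simp only [e1, e2, e3, e4, if_pos ha, if_pos hb, if_pos hab',
            if_neg (show ¬ a = a + 1 from by omega),
            if_neg (show ¬ (a - 1 : ℕ) = a + 1 from by omega),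
            if_pos (show a = a + 1 - 1 from by omega),
            if_neg (show ¬ (a - 1 : ℕ) = a + 1 - 1 from by omega),
            if_pos (show a = a + 1 + 1 ∨ a + 1 = a + 1 from Or.inr rfl)]
          try simp
          try ring
        · obtain ⟨c, rfl⟩ : ∃ c, b = a + c + 2 := ⟨b - a - 2, by omega⟩
          have e1 : ((a : ℤ) - ((a + c + 2 : ℕ) : ℤ)).natAbs = c + 2 := by omega
          have e2 : (((a - 1 : ℕ) : ℤ) - ((a + c + 2 : ℕ) : ℤ)).natAbs = c + 3 := by omega
          have e3 : ((a : ℤ) - (((a + c + 2 : ℕ) - 1 : ℕ) : ℤ)).natAbs = c + 1 := by omega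
          have e4 : (((a - 1 : ℕ) : ℤ) - (((a + c + 2 : ℕ) - 1 : ℕ) : ℤ)).natAbs = c + 2 := by omega
          simp only [e1, e2, e3, e4, if_pos ha, if_pos hb, if_pos hab',
            if_neg (show ¬ a = a + c + 2 from by omega),
            if_neg (show ¬ (a - 1 : ℕ) = a + c + 2 from by omega),
            if_neg (show ¬ a = a + c + 2 - 1 from by omega),
            if_neg (show ¬ (a - 1 : ℕ) = a + c + 2 - 1 from by omega),
            if_neg (show ¬ (a = a + c + 2 + 1 ∨ a + c + 2 = a + 1) from by omega)]
          ring
      · subst hab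
        have e1 : ((a : ℤ) - (a : ℤ)).natAbs = 0 := by omega
        have e2 : (((a - 1 : ℕ) : ℤ) - (a : ℤ)).natAbs = 1 := by omega
        have e3 : ((a : ℤ) - (((a : ℕ) - 1 : ℕ) : ℤ)).natAbs = 1 := by omega
        have e4 : (((a - 1 : ℕ) : ℤ) - (((a : ℕ) - 1 : ℕ) : ℤ)).natAbs = 0 := by omega
        simp only [e1, e2, e3, e4, if_pos ha, if_pos hb, if_pos hab',
          if_pos (rfl : a = a), if_pos (rfl : (a - 1 : ℕ) = a - 1),
          if_neg (show ¬ (a - 1 : ℕ) = a from by omega),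
          if_neg (show ¬ a = a - 1 from by omega),
          if_neg (show ¬ a = 0 from by omega)]
        try simp
        try ring
      · rcases Nat.lt_or_ge a (b + 2) with h2 | h2
        · have ha1 : a = b + 1 := by omega
          subst ha1
          have e1 : (((b + 1 : ℕ) : ℤ) - (b : ℤ)).natAbs = 1 := by omega
          have e2 : ((((b + 1 : ℕ) - 1 : ℕ) : ℤ) - (b : ℤ)).natAbs = 0 := by omega
          have e3 : (((b + 1 : ℕ) : ℤ) - (((b : ℕ) - 1 : ℕ) : ℤ)).natAbs = 2 := by omega
          have e4 : ((((b + 1 : ℕ) - 1 : ℕ) : ℤ) - (((b : ℕ) - 1 : ℕ) : ℤ)).natAbs = 1 := by omega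
          simp only [e1, e2, e3, e4, if_pos ha, if_pos hb, if_pos hab',
            if_neg (show ¬ b + 1 = b from by omega),
            if_pos (show (b + 1 - 1 : ℕ) = b from by omega),
            if_neg (show ¬ b + 1 = b - 1 from by omega),
            if_neg (show ¬ (b + 1 - 1 : ℕ) = b - 1 from by omega),
            if_pos (show b + 1 = b + 1 ∨ b = b + 1 + 1 from Or.inl rfl)]
          try simp
          try ring
        · obtain ⟨c, rfl⟩ : ∃ c, a = b + c + 2 := ⟨a - b - 2, by omega⟩
          have e1 : (((b + c + 2 : ℕ) : ℤ) - (b : ℤ)).natAbs = c + 2 := by omega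
          have e2 : ((((b + c + 2 : ℕ) - 1 : ℕ) : ℤ) - (b : ℤ)).natAbs = c + 1 := by omega
          have e3 : (((b + c + 2 : ℕ) : ℤ) - (((b : ℕ) - 1 : ℕ) : ℤ)).natAbs = c + 3 := by omega
          have e4 : ((((b + c + 2 : ℕ) - 1 : ℕ) : ℤ) - (((b : ℕ) - 1 : ℕ) : ℤ)).natAbs = c + 2 := by omega
          simp only [e1, e2, e3, e4, if_pos ha, if_pos hb, if_pos hab',
            if_neg (show ¬ b + c + 2 = b from by omega),
            if_neg (show ¬ (b + c + 2 - 1 : ℕ) = b from by omega),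
            if_neg (show ¬ b + c + 2 = b - 1 from by omega),
            if_neg (show ¬ (b + c + 2 - 1 : ℕ) = b - 1 from by omega),
            if_neg (show ¬ (b + c + 2 = b + 1 ∨ b = b + c + 2 + 1) from by omega)]
          ring


def genM (q e : R) (n : ℕ) : Matrix (Fin n) (Fin n) R :=
  Matrix.of fun j k => ment q e (j : ℕ) (k : ℕ)


def triC (q e : R) (n : ℕ) : Matrix (Fin n) (Fin n) R :=
  Matrix.of fun j k => tent q e (j : ℕ) (k : ℕ)


lemma tent_far (q e : R) {a b : ℕ} (h : ¬ (a = b ∨ a = b + 1 ∨ b = a + 1)) :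
    tent q e a b = 0 := by
  unfold tent
  rw [if_neg (by tauto), if_neg (by tauto)]

lemma det_triC_rec (q e : R) (n : ℕ) :
    (triC q e (n+2)).det
      = (1 - q ^ 2 + e * (1 + q ^ 2)) * (triC q e (n+1)).det
        - (q * e) ^ 2 * (triC q e n).det := by
  rw [Matrix.det_succ_row (triC q e (n+2)) (Fin.last (n+1))]
  rw [Fin.sum_univ_castSucc, Fin.sum_univ_castSucc]
  have hz : ∀ j : Fin n,
      (-1 : R) ^ ((Fin.last (n+1) : ℕ) + ((j.castSucc.castSucc : Fin (n+2)) : ℕ))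
        * triC q e (n+2) (Fin.last (n+1)) j.castSucc.castSucc
        * ((triC q e (n+2)).submatrix (Fin.last (n+1)).succAbove
            (j.castSucc.castSucc).succAbove).det = 0 := by
    intro j
    have hj := j.2
    have : triC q e (n+2) (Fin.last (n+1)) j.castSucc.castSucc = 0 := by
      simp only [triC, Matrix.of_apply, Fin.coe_castSucc, Fin.val_last]
      exact tent_far q e (by omega)
    rw [this, mul_zero, zero_mul]
  rw [Finset.sum_eq_zero (fun j _ => hz j), zero_add]
  -- the minor at column n+1 (the last column)
  have hminor1 : (triC q e (n+2)).submatrix (Fin.last (n+1)).succAbove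
      (Fin.last (n+1)).succAbove = triC q e (n+1) := by
    ext a b
    simp [triC, Fin.succAbove_last, Matrix.submatrix_apply]
  -- the minor at column n
  set c : Fin (n+2) := (Fin.last n).castSucc with hc
  have hcval : (c : ℕ) = n := by simp [hc]
  -- entry at (last, c)
  have hentc : triC q e (n+2) (Fin.last (n+1)) c = -(q * e) := by
    simp only [triC, Matrix.of_apply, Fin.val_last, hcval]
    unfold tent
    rw [if_neg (by omega), if_pos (Or.inl rfl)]
  have hentd : triC q e (n+2) (Fin.last (n+1)) (Fin.last (n+1))
      = 1 - q ^ 2 + e * (1 + q ^ 2) := by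
    simp only [triC, Matrix.of_apply, Fin.val_last]
    unfold tent
    rw [if_pos rfl, if_neg (by omega)]
  -- determinant of the minor at column c
  have hminor2 : ((triC q e (n+2)).submatrix (Fin.last (n+1)).succAbove c.succAbove).det
      = -(q * e) * (triC q e n).det := by
    rw [Matrix.det_succ_column _ (Fin.last n)]
    rw [Fin.sum_univ_castSucc]
    have hz2 : ∀ i : Fin n,
        (-1 : R) ^ (((i.castSucc : Fin (n+1)) : ℕ) + ((Fin.last n : Fin (n+1)) : ℕ))
          * ((triC q e (n+2)).submatrix (Fin.last (n+1)).succAbove c.succAbove) i.castSucc (Fin.last n)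
          * (((triC q e (n+2)).submatrix (Fin.last (n+1)).succAbove c.succAbove).submatrix
              i.castSucc.succAbove (Fin.last n).succAbove).det = 0 := by
      intro i
      have hi := i.2
      have hcol : ((c.succAbove (Fin.last n)) : ℕ) = n + 1 := by
        rw [coe_succAbove]
        simp [hcval]
      have : ((triC q e (n+2)).submatrix (Fin.last (n+1)).succAbove c.succAbove)
          i.castSucc (Fin.last n) = 0 := by
        simp only [Matrix.submatrix_apply, triC, Matrix.of_apply, Fin.succAbove_last,
          Fin.coe_castSucc, hcol]
        exact tent_far q e (by omega)
      rw [this, mul_zero, zero_mul]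
    rw [Finset.sum_eq_zero (fun i _ => hz2 i), zero_add]
    have hcol : ((c.succAbove (Fin.last n)) : ℕ) = n + 1 := by
      rw [coe_succAbove]
      simp [hcval]
    have hent : ((triC q e (n+2)).submatrix (Fin.last (n+1)).succAbove c.succAbove)
        (Fin.last n) (Fin.last n) = -(q * e) := by
      simp only [Matrix.submatrix_apply, triC, Matrix.of_apply, Fin.succAbove_last,
        Fin.coe_castSucc, hcol, Fin.val_last]
      unfold tent
      rw [if_neg (by omega), if_pos (Or.inr rfl)]
    have hmm : (((triC q e (n+2)).submatrix (Fin.last (n+1)).succAbove c.succAbove).submatrix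
        (Fin.last n).succAbove (Fin.last n).succAbove) = triC q e n := by
      ext a b
      have ha := a.2
      have hb := b.2
      have hrow : (((Fin.last (n+1)).succAbove ((Fin.last n).succAbove a)) : ℕ) = (a : ℕ) := by
        simp [Fin.succAbove_last]
      have hcol2 : ((c.succAbove ((Fin.last n).succAbove b)) : ℕ) = (b : ℕ) := by
        rw [Fin.succAbove_last, coe_succAbove]
        simp [hcval]
        try omega
      simp only [Matrix.submatrix_apply, triC, Matrix.of_apply, hrow, hcol2]
    rw [hent, hmm]
    simp only [Fin.val_last]
    have hsign : (-1 : R) ^ ((n : ℕ) + n) = 1 := Even.neg_one_pow ⟨n, by omega⟩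
    rw [hsign]
    ring
  rw [hminor1, hminor2, hentc, hentd]
  have h1 : (-1 : R) ^ ((Fin.last (n+1) : ℕ) + ((c : Fin (n+2)) : ℕ)) = -1 := by
    rw [Fin.val_last, hcval]
    exact Odd.neg_one_pow ⟨n, by omega⟩
  have h2 : (-1 : R) ^ ((Fin.last (n+1) : ℕ) + ((Fin.last (n+1) : Fin (n+2)) : ℕ)) = 1 := by
    rw [Fin.val_last]
    exact Even.neg_one_pow ⟨n+1, by omega⟩
  rw [h1, h2]
  ring










lemma conj_eq (q e : R) (n : ℕ) :
    ((1 : Matrix (Fin n) (Fin n) R) - q • SB R n) * genM q e n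
      * ((1 : Matrix (Fin n) (Fin n) R) - q • SB R n)ᵀ = triC q e n := by
  have expand :
      ((1 : Matrix (Fin n) (Fin n) R) - q • SB R n) * genM q e n
        * ((1 : Matrix (Fin n) (Fin n) R) - q • SB R n)ᵀ
      = genM q e n - q • (SB R n * genM q e n) - q • (genM q e n * (SB R n)ᵀ)
        + (q * q) • (SB R n * genM q e n * (SB R n)ᵀ) := by
    simp only [Matrix.transpose_sub, Matrix.transpose_one, Matrix.transpose_smul,
      Matrix.sub_mul, Matrix.mul_sub, Matrix.one_mul, Matrix.mul_one,
      Matrix.smul_mul, Matrix.mul_smul, smul_sub, smul_smul]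
    abel
  rw [expand]
  ext j k
  simp only [Matrix.add_apply, Matrix.sub_apply, Matrix.smul_apply, smul_eq_mul]
  simp only [SB_mul, mul_SBt]
  have key := entry_key q e (j : ℕ) (k : ℕ)
  rw [triC, Matrix.of_apply, ← key, genM]
  simp only [Matrix.of_apply]
  by_cases hj : 0 < (j : ℕ) <;> by_cases hk : 0 < (k : ℕ) <;>
    simp [hj, hk] <;> try ring


lemma det_genM (q e : R) (n : ℕ) : (genM q e n).det = (triC q e n).det := by
  have h := congrArg Matrix.det (conj_eq q e n)
  rw [Matrix.det_mul, Matrix.det_mul, Matrix.det_transpose, det_BB q, one_mul, mul_one] at h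
  exact h

lemma det_triC_one (q e : R) : (triC q e 1).det = 1 + e := by
  rw [Matrix.det_fin_one]
  simp [triC, tent]

lemma detU (q : R) : ∀ n : ℕ,
    (triC q 1 n).det = lucasU 2 (q ^ 2) (n + 1) ∧
    (triC q 1 (n + 1)).det = lucasU 2 (q ^ 2) (n + 2) := by
  intro n
  induction n with
  | zero =>
    constructor
    · rw [show (triC q 1 0).det = 1 from Matrix.det_fin_zero]
      simp [lucasU]
    · rw [det_triC_one]
      show (1 : R) + 1 = 2 * lucasU 2 (q ^ 2) 1 - q ^ 2 * lucasU 2 (q ^ 2) 0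
      simp [lucasU]
      norm_num
  | succ n ih =>
    obtain ⟨h1, h2⟩ := ih
    refine ⟨h2, ?_⟩
    rw [det_triC_rec, h1, h2]
    rw [show lucasU (2 : R) (q ^ 2) (n + 1 + 2)
      = 2 * lucasU 2 (q ^ 2) (n + 2) - q ^ 2 * lucasU 2 (q ^ 2) (n + 1) from by rw [lucasU]]
    ring

lemma detV (q : R) : ∀ n : ℕ,
    (triC q (-1) (n + 1)).det = (-1) ^ n * q ^ (n + 1) * lucasU (2 * q) 1 n ∧
    (triC q (-1) (n + 2)).det = (-1) ^ (n + 1) * q ^ (n + 2) * lucasU (2 * q) 1 (n + 1) := by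
  intro n
  induction n with
  | zero =>
    have hb0 : (triC q (-1) 0).det = 1 := Matrix.det_fin_zero
    have hb1 : (triC q (-1) 1).det = 0 := by rw [det_triC_one]; ring
    constructor
    · rw [hb1]
      simp [lucasU]
    · rw [det_triC_rec, hb0, hb1]
      rw [show lucasU (2 * q) 1 1 = 1 from rfl]
      ring
  | succ n ih =>
    obtain ⟨h1, h2⟩ := ih
    refine ⟨h2, ?_⟩
    rw [det_triC_rec, h1, h2]
    rw [show lucasU (2 * q) 1 (n + 2) = 2 * q * lucasU (2 * q) 1 (n + 1) - 1 * lucasU (2 * q) 1 n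
      from by rw [lucasU]]
    ring

end Aux

theorem stmt_17 {R : Type*} [CommRing R] (q : R) (n : ℕ) (hn : 0 < n) :
    Matrix.det (Matrix.of fun j k : Fin n =>
        q ^ ((j : ℤ) - (k : ℤ)).natAbs + (if j = k then 1 else 0)) =
        lucasU (2 : R) (q ^ 2) (n + 1) ∧
    Matrix.det (Matrix.of fun j k : Fin n =>
        q ^ ((j : ℤ) - (k : ℤ)).natAbs - (if j = k then 1 else 0)) =
        (-1) ^ (n - 1) * q ^ n * lucasU (2 * q) 1 (n - 1) := by
  obtain ⟨m, rfl⟩ : ∃ m, n = m + 1 := ⟨n - 1, by omega⟩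
  constructor
  · have hM : (Matrix.of fun j k : Fin (m+1) =>
        q ^ ((j : ℤ) - (k : ℤ)).natAbs + (if j = k then 1 else 0)) = genM q 1 (m+1) := by
      ext j k
      simp only [Matrix.of_apply, genM, ment, one_mul]
      congr 1
      simp [Fin.ext_iff]
    rw [hM, det_genM, (detU q (m+1)).1]
  · have hM : (Matrix.of fun j k : Fin (m+1) =>
        q ^ ((j : ℤ) - (k : ℤ)).natAbs - (if j = k then 1 else 0)) = genM q (-1) (m+1) := by
      ext j k
      simp only [Matrix.of_apply, genM, ment, Fin.ext_iff]
      split_ifs <;> ring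
    rw [hM, det_genM, (detV q m).1]
    simp
end

section
/- Let A ∈ ℂ with A·(A^2+4) ≠ 0 and let (w_i) satisfy w_{i+1} = A·w_i + w_{i−1} for i ≥ 1. For any positive even integer n, the characteristic polynomial det[x·δ_{jk} − w_{j+k}]_{0≤j,k≤n−1} equals x^n − (w_1·v_{n−1}(A,−1) + w_0·v_{n−2}(A,−1))·(u_n(A,−1)/A)·x^{n−1} + (w_0^2 + A·w_0·w_1 − w_1^2)·(u_n(A,−1)^2/A^2)·x^{n−2}. -/
/-!
Write `w k = a * α ^ k + b * β ^ k`, where `α, β` are the roots of `t ^ 2 - A * t - 1`. The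
Hankel matrix is then `P * Q` with `P = [α ^ j, β ^ j]` of size `n × 2` and `Q = diag(a, b) * Pᵀ`,
so its characteristic polynomial is `X ^ (n - 2)` times that of the `2 × 2` matrix `Q * P`. Since
`α * β = -1` and `n` is even, `∑ j < n, (α * β) ^ j = 0`: the two columns of `P` are orthogonal
and `Q * P` is diagonal, with entries `a * ∑ α ^ (2 * j)` and `b * ∑ β ^ (2 * j)`. Summing these
geometric series and using the Binet formulas for `u` and `v` turns their sum and product into
the two coefficients.
-/

open Polynomial Finset

section Binet

variable {R : Type*} [CommRing R] (α β : R)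

theorem lucasU_mul_sub_eq_pow_sub_pow : ∀ n, lucasU (α + β) (α * β) n * (α - β) = α ^ n - β ^ n
  | 0 => by simp [lucasU]
  | 1 => by simp [lucasU]
  | n + 2 => by
    rw [lucasU]
    linear_combination
      (α + β) * lucasU_mul_sub_eq_pow_sub_pow (n + 1) - α * β * lucasU_mul_sub_eq_pow_sub_pow n

theorem lucasV_eq_pow_add_pow : ∀ n, lucasV (α + β) (α * β) n = α ^ n + β ^ n
  | 0 => by norm_num [lucasV]
  | 1 => by simp [lucasV]
  | n + 2 => by
    rw [lucasV, lucasV_eq_pow_add_pow (n + 1), lucasV_eq_pow_add_pow n]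
    ring

end Binet

theorem exists_eq_mul_pow_add_mul_pow {K : Type*} [Field K] {α β : K} (hαβ : α ≠ β) {w : ℕ → K}
    (hw : ∀ i, w (i + 2) = (α + β) * w (i + 1) - α * β * w i) :
    ∃ a b : K, ∀ k, w k = a * α ^ k + b * β ^ k := by
  have hne : α - β ≠ 0 := sub_ne_zero.mpr hαβ
  refine ⟨(w 1 - β * w 0) / (α - β), (α * w 0 - w 1) / (α - β), fun k => ?_⟩
  induction k using Nat.twoStepInduction with
  | zero => field_simp; ring
  | one => field_simp; ring
  | more k ih₀ ih₁ => rw [hw, ih₀, ih₁]; ring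

theorem exists_add_eq_mul_eq_neg_one {A : ℂ} (hA : A ^ 2 + 4 ≠ 0) :
    ∃ α β : ℂ, α + β = A ∧ α * β = -1 ∧ α ≠ β := by
  obtain ⟨s, hs⟩ := IsAlgClosed.exists_eq_mul_self (A ^ 2 + 4)
  refine ⟨(A + s) / 2, (A - s) / 2, by ring, by linear_combination hs / 4, fun h => hA ?_⟩
  rw [hs, show s = 0 by linear_combination h]
  ring

theorem mul_geom_sum_mul_self {R : Type*} [CommRing R] {γ δ : R} (hγδ : γ * δ = -1) {m : ℕ}
    (hm : Even m) :
    (γ + δ) * ∑ j ∈ range (m + 2), (γ * γ) ^ j = γ ^ (m + 1) * (γ ^ (m + 2) - δ ^ (m + 2)) := by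
  have hγ : IsUnit γ := .of_mul_eq_one (-δ) (by linear_combination -hγδ)
  have hpow : (γ * δ) ^ (m + 2) = 1 := by rw [hγδ, (hm.add even_two).neg_one_pow]
  -- after multiplying by `γ`, this is the geometric sum, as `γ * (γ + δ) = γ * γ - 1`
  refine hγ.mul_left_cancel ?_
  linear_combination geom_sum_mul (γ * γ) (m + 2) + (∑ j ∈ range (m + 2), (γ * γ) ^ j) * hγδ + hpow

theorem charpoly_hankel_of_mul_eq_neg_one {R : Type*} [CommRing R] {α β : R} (hαβ : α * β = -1)
    (a b : R) {m : ℕ} (hm : Even m) :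
    (Matrix.of fun j k : Fin (m + 2) => a * α ^ ((j : ℕ) + k) + b * β ^ ((j : ℕ) + k)).charpoly =
      X ^ m * ((X - C (a * ∑ j ∈ range (m + 2), (α * α) ^ j)) *
        (X - C (b * ∑ j ∈ range (m + 2), (β * β) ^ j))) := by
  set P : Matrix (Fin (m + 2)) (Fin 2) R := .of fun j i => ![α, β] i ^ (j : ℕ)
  set Q : Matrix (Fin 2) (Fin (m + 2)) R := .of fun i k => ![a, b] i * ![α, β] i ^ (k : ℕ)
  have hPQ : (Matrix.of fun j k : Fin (m + 2) => a * α ^ ((j : ℕ) + k) + b * β ^ ((j : ℕ) + k)) =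
      P * Q := by
    ext j k
    simp [P, Q, Matrix.mul_apply, Fin.sum_univ_two, pow_add]
    ring
  have hcross : ∑ j ∈ range (m + 2), (α * β) ^ j = 0 := by
    rw [hαβ, neg_one_geom_sum, if_pos (hm.add even_two)]
  have hQP : Q * P = Matrix.diagonal ![a * ∑ j ∈ range (m + 2), (α * α) ^ j,
      b * ∑ j ∈ range (m + 2), (β * β) ^ j] := by
    have hrange (γ : R) : ∑ j : Fin (m + 2), γ ^ (j : ℕ) = ∑ j ∈ range (m + 2), γ ^ j :=
      Fin.sum_univ_eq_sum_range (γ ^ ·) _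
    ext i l
    fin_cases i <;> fin_cases l <;>
      simp [P, Q, Matrix.mul_apply, ← mul_pow, mul_assoc, ← Finset.mul_sum, hrange, hcross,
        mul_comm β α]
  rw [hPQ, Matrix.charpoly_mul_comm_of_le _ _ (by simp), hQP, Matrix.charpoly_diagonal]
  simp

section Eigenvalues

variable {K : Type*} [Field K] {α β : K} (a b : K) {m : ℕ}

theorem mul_geom_sum_add_mul_geom_sum (hαβ : α * β = -1) (hA : α + β ≠ 0) (hm : Even m) :
    a * ∑ j ∈ range (m + 2), (α * α) ^ j + b * ∑ j ∈ range (m + 2), (β * β) ^ j =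
      ((a * α + b * β) * lucasV (α + β) (-1) (m + 1) + (a + b) * lucasV (α + β) (-1) m) *
        (lucasU (α + β) (-1) (m + 2) / (α + β)) := by
  have hU := lucasU_mul_sub_eq_pow_sub_pow α β (m + 2)
  have hSα := mul_geom_sum_mul_self hαβ hm
  have hSβ := mul_geom_sum_mul_self (mul_comm β α ▸ hαβ) hm
  rw [← hαβ, lucasV_eq_pow_add_pow, lucasV_eq_pow_add_pow, mul_div_assoc', eq_div_iff hA]
  -- `w₁ v (m + 1) + w₀ v m`
  --   `= (α - β) (a α ^ (m + 1) - b β ^ (m + 1)) + (a + b) (α ^ m + β ^ m) (α β + 1)`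
  linear_combination a * hSα + b * hSβ - (a * α ^ (m + 1) - b * β ^ (m + 1)) * hU
    - (a + b) * (α ^ m + β ^ m) * lucasU (α + β) (α * β) (m + 2) * hαβ

theorem mul_geom_sum_mul_mul_geom_sum (hαβ : α * β = -1) (hA : α + β ≠ 0) (hm : Even m) :
    (a * ∑ j ∈ range (m + 2), (α * α) ^ j) * (b * ∑ j ∈ range (m + 2), (β * β) ^ j) =
      ((a + b) ^ 2 + (α + β) * (a + b) * (a * α + b * β) - (a * α + b * β) ^ 2) *
        (lucasU (α + β) (-1) (m + 2) ^ 2 / (α + β) ^ 2) := by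
  have hU := lucasU_mul_sub_eq_pow_sub_pow α β (m + 2)
  have hSα := mul_geom_sum_mul_self hαβ hm
  have hSβ := mul_geom_sum_mul_self (mul_comm β α ▸ hαβ) hm
  have hodd : (α * β) ^ (m + 1) = -1 := by rw [hαβ, hm.add_one.neg_one_pow]
  set U := lucasU (α + β) (α * β) (m + 2)
  set D := α ^ (m + 2) - β ^ (m + 2)
  rw [← hαβ, mul_div_assoc', eq_div_iff (pow_ne_zero 2 hA)]
  -- `w₀ ^ 2 + A w₀ w₁ - w₁ ^ 2 = a b (α - β) ^ 2 + (a + b) ^ 2 (α β + 1)`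
  linear_combination a * b * ((β + α) * ∑ j ∈ range (m + 2), (β * β) ^ j) * hSα
    + a * b * α ^ (m + 1) * D * hSβ - a * b * D ^ 2 * hodd
    - a * b * (D + U * (α - β)) * hU - (a + b) ^ 2 * U ^ 2 * hαβ

end Eigenvalues

theorem stmt_18 (A : ℂ) (hA : A * (A ^ 2 + 4) ≠ 0) (w : ℕ → ℂ)
    (hw : ∀ i : ℕ, w (i + 2) = A * w (i + 1) + w i)
    (n : ℕ) (hn : 0 < n) (hev : Even n) (x : ℂ) :
    Matrix.det (Matrix.of fun j k : Fin n =>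
        x * (if j = k then 1 else 0) - w ((j : ℕ) + (k : ℕ))) =
      x ^ n
        - (w 1 * lucasV A (-1) (n - 1) + w 0 * lucasV A (-1) (n - 2)) *
            (lucasU A (-1) n / A) * x ^ (n - 1)
        + (w 0 ^ 2 + A * w 0 * w 1 - w 1 ^ 2) * (lucasU A (-1) n ^ 2 / A ^ 2) * x ^ (n - 2) := by
  obtain ⟨α, β, rfl, hαβ, hne⟩ := exists_add_eq_mul_eq_neg_one (right_ne_zero_of_mul hA)
  obtain ⟨a, b, hab⟩ := exists_eq_mul_pow_add_mul_pow hne (w := w) fun i => by rw [hw, hαβ]; ring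
  obtain ⟨m, rfl⟩ : ∃ m, n = m + 2 := ⟨n - 2, by obtain ⟨k, rfl⟩ := hev; omega⟩
  have hm : Even m := (Nat.even_add.mp hev).mpr even_two
  have hw0 : w 0 = a + b := by simp [hab]
  have hw1 : w 1 = a * α + b * β := by simp [hab]
  have hchar : (Matrix.of fun j k : Fin (m + 2) => x * (if j = k then 1 else 0) - w (j + k)) =
      Matrix.scalar _ x - Matrix.of fun j k : Fin (m + 2) =>
        a * α ^ ((j : ℕ) + k) + b * β ^ ((j : ℕ) + k) := by
    ext j k
    simp [hab, Matrix.diagonal_apply]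
  rw [hchar, ← Matrix.eval_charpoly, charpoly_hankel_of_mul_eq_neg_one hαβ a b hm, hw0, hw1,
    Nat.add_sub_cancel, show m + 2 - 1 = m + 1 by omega,
    ← mul_geom_sum_add_mul_geom_sum a b hαβ (left_ne_zero_of_mul hA) hm,
    ← mul_geom_sum_mul_mul_geom_sum a b hαβ (left_ne_zero_of_mul hA) hm]
  simp only [eval_mul, eval_pow, eval_sub, eval_X, eval_C]
  ring
end
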